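/- arXiv:1405.3626 — 2 statements merged into one kernel-verified Lean document; each statement's English description precedes it below -/
import Mathlib

section
/- For every integer n ≥ 1: if n = k(3k−1) for some integer k, then C̄_{4,1}(n) ≡ 1 (mod 2); otherwise C̄_{4,1}(n) ≡ 0 (mod 2). -/
open Finset PowerSeries

noncomputable section
namespace C41

abbrev R2 := ZMod 2

lemma r2_sq (x : ZMod 2) : x * x = x := by revert x; decide

/-- Product of (1 + X^e) over a finset of exponents. -/
def PE (E : Finset ℕ) : PowerSeries R2 := ∏ e ∈ E, (1 + X ^ e)

lemma PE_eq_sum (E : Finset ℕ) : PE E = ∑ T ∈ E.powerset, X ^ (T.sum id) := by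
  unfold PE
  have : ∀ e ∈ E, (1 + X ^ e : PowerSeries R2) = X ^ e + 1 := fun _ _ => add_comm _ _
  rw [Finset.prod_congr rfl this, Finset.prod_add]
  refine Finset.sum_congr rfl fun T hT => ?_
  rw [Finset.prod_const_one, mul_one, ← Finset.prod_pow_eq_pow_sum]
  rfl

lemma coeff_PE (E : Finset ℕ) (n : ℕ) :
    (coeff n) (PE E) = ((E.powerset.filter (fun T => T.sum id = n)).card : R2) := by
  rw [PE_eq_sum, map_sum]
  rw [Finset.card_filter]
  push_cast
  refine Finset.sum_congr rfl fun T _ => ?_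
  rw [coeff_X_pow]
  by_cases h : T.sum id = n <;> simp [h, eq_comm]


lemma coeff_PE_zero (E : Finset ℕ) (hE : 0 ∉ E) : (coeff 0) (PE E) = 1 := by
  rw [coeff_PE]
  have : E.powerset.filter (fun T => T.sum id = 0) = {∅} := by
    ext T
    simp only [Finset.mem_filter, Finset.mem_powerset, Finset.mem_singleton]
    constructor
    · rintro ⟨hsub, hsum⟩
      by_contra hne
      obtain ⟨x, hx⟩ := Finset.nonempty_iff_ne_empty.2 hne
      have hx0 : x = 0 := by
        have := Finset.single_le_sum (f := id) (fun i _ => Nat.zero_le i) hx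
        simp only [id_eq] at this hsum
        omega
      exact hE (hsub (hx0 ▸ hx))
    · rintro rfl; simp
  rw [this]; simp

/-- Coefficient `n` of `PE E` only depends on the exponents `≤ n` in `E`. -/
lemma coeff_PE_congr {E E' : Finset ℕ} (n : ℕ)
    (h : E.filter (· ≤ n) = E'.filter (· ≤ n)) :
    (coeff n) (PE E) = (coeff n) (PE E') := by
  rw [coeff_PE, coeff_PE]
  congr 1
  have key : ∀ F : Finset ℕ,
      F.powerset.filter (fun T => T.sum id = n)
        = (F.filter (· ≤ n)).powerset.filter (fun T => T.sum id = n) := by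
    intro F
    ext T
    simp only [Finset.mem_filter, Finset.mem_powerset]
    constructor
    · rintro ⟨hsub, hsum⟩
      refine ⟨fun x hx => Finset.mem_filter.2 ⟨hsub hx, ?_⟩, hsum⟩
      have := Finset.single_le_sum (f := id) (fun i _ => Nat.zero_le i) hx
      simp only [id_eq] at this hsum
      omega
    · rintro ⟨hsub, hsum⟩
      exact ⟨fun x hx => (Finset.mem_filter.1 (hsub hx)).1, hsum⟩
  rw [key E, h, ← key E']

/-- If `f` and `f'` agree on coefficients up to `n`, products agree at `n`. -/
lemma coeff_mul_congr {f f' u : PowerSeries R2} (n : ℕ)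
    (h : ∀ i ≤ n, (coeff i) f = (coeff i) f') :
    (coeff n) (f * u) = (coeff n) (f' * u) := by
  rw [coeff_mul, coeff_mul]
  refine Finset.sum_congr rfl fun p hp => ?_
  rw [Finset.HasAntidiagonal.mem_antidiagonal] at hp
  rw [h p.1 (by omega)]

/-- If the coefficients of `f` up to `n` are `δ_{i,0}`, then `f*u` has coeff `n` equal to that of `u`. -/
lemma coeff_mul_delta {f u : PowerSeries R2} (n : ℕ)
    (h : ∀ i ≤ n, (coeff i) f = if i = 0 then 1 else 0) :
    (coeff n) (f * u) = (coeff n) u := by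
  rw [coeff_mul]
  rw [Finset.sum_eq_single (0, n)]
  · rw [h 0 (by omega)]; simp
  · rintro ⟨i, j⟩ hp hne
    rw [Finset.HasAntidiagonal.mem_antidiagonal] at hp
    have hi : i ≠ 0 := by rintro rfl; simp at hp; exact hne (by simp [hp])
    rw [h i (by omega)]
    simp [hi]
  · intro hmem
    exact absurd (Finset.HasAntidiagonal.mem_antidiagonal.2 (by simp)) hmem

/-- Coefficients of a square in char 2. -/
lemma coeff_sq (f : PowerSeries R2) (n : ℕ) :
    (coeff n) (f * f) = if n % 2 = 0 then (coeff (n / 2)) f else 0 := by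
  rw [coeff_mul]
  by_cases hpar : n % 2 = 0
  · have hmem : ((n/2 : ℕ), (n/2 : ℕ)) ∈ Finset.HasAntidiagonal.antidiagonal n := by
      rw [Finset.HasAntidiagonal.mem_antidiagonal]; omega
    rw [← Finset.add_sum_erase _ _ hmem, r2_sq]
    simp only [hpar, if_true]
    have hz : ∑ p ∈ (Finset.HasAntidiagonal.antidiagonal n).erase (n/2, n/2),
        (coeff p.1) f * (coeff p.2) f = 0 := by
      apply Finset.sum_involution (fun p _ => (p.2, p.1))
      · intro p _
        rw [mul_comm]
        exact CharTwo.add_self_eq_zero _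
      · rintro ⟨i, j⟩ hp _
        simp only [Finset.mem_erase, Finset.HasAntidiagonal.mem_antidiagonal, ne_eq, Prod.ext_iff] at hp
        simp only [ne_eq, Prod.ext_iff, not_and]
        intro hji _
        exact hp.1 ⟨by omega, by omega⟩
      · rintro ⟨i, j⟩ hp
        simp only [Finset.mem_erase, Finset.HasAntidiagonal.mem_antidiagonal, ne_eq, Prod.ext_iff] at hp ⊢
        exact ⟨fun h => hp.1 ⟨by omega, by omega⟩, by omega⟩
      · intro p hp; rfl
    rw [hz, add_zero]
  · simp only [hpar, if_false]
    apply Finset.sum_involution (fun p _ => (p.2, p.1))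
    · intro p _
      rw [mul_comm]
      exact CharTwo.add_self_eq_zero _
    · rintro ⟨i, j⟩ hp _
      rw [Finset.HasAntidiagonal.mem_antidiagonal] at hp
      simp only [ne_eq, Prod.ext_iff, not_and]
      intro hji
      omega
    · rintro ⟨i, j⟩ hp
      rw [Finset.HasAntidiagonal.mem_antidiagonal] at hp ⊢
      omega
    · intro p hp; rfl


/-- All exponents from 1 to M. -/
def AllE (M : ℕ) : Finset ℕ := Finset.Icc 1 M
/-- Odd exponents from 1 to M. -/
def OddE (M : ℕ) : Finset ℕ := (Finset.Icc 1 M).filter (fun e => e % 2 = 1)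

lemma two_eq_zero : (2 : PowerSeries R2) = 0 := by
  rw [← map_ofNat ((PowerSeries.C : R2 →+* PowerSeries R2)) 2, show (2 : R2) = 0 by decide, map_zero]

lemma sq_one_add (e : ℕ) :
    ((1 + X ^ e : PowerSeries R2)) * (1 + X ^ e) = 1 + X ^ (2 * e) := by
  have hp : (X ^ (2*e) : PowerSeries R2) = X ^ e * X ^ e := by rw [two_mul, pow_add]
  rw [hp]
  linear_combination (X ^ e : PowerSeries R2) * two_eq_zero

lemma PE_sq (E : Finset ℕ) : PE (E.image (fun e => 2 * e)) = PE E * PE E := by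
  unfold PE
  rw [Finset.prod_image (fun a _ b _ h => by omega), ← Finset.prod_mul_distrib]
  exact Finset.prod_congr rfl fun e _ => (sq_one_add e).symm

lemma evenE_eq_image (M : ℕ) :
    (Finset.Icc 1 M).filter (fun e => ¬ e % 2 = 1) = (Finset.Icc 1 (M / 2)).image (fun e => 2 * e) := by
  ext e
  simp only [Finset.mem_filter, Finset.mem_Icc, Finset.mem_image]
  constructor
  · rintro ⟨⟨h1, h2⟩, h3⟩
    exact ⟨e / 2, by omega, by omega⟩
  · rintro ⟨j, ⟨hj1, hj2⟩, rfl⟩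
    omega

lemma PE_all_split (M : ℕ) :
    PE (AllE M) = PE (OddE M) * (PE (AllE (M / 2)) * PE (AllE (M / 2))) := by
  unfold PE AllE OddE
  rw [← Finset.prod_filter_mul_prod_filter_not (Finset.Icc 1 M) (fun e => e % 2 = 1)]
  rw [show ((Finset.Icc 1 M).filter (fun e => ¬ e % 2 = 1)).prod (fun e => (1 + X ^ e : PowerSeries R2))
      = PE ((Finset.Icc 1 M).filter (fun e => ¬ e % 2 = 1)) from rfl]
  rw [evenE_eq_image, PE_sq]
  rfl

lemma euler : ∀ n M : ℕ, n ≤ M →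
    (coeff n) (PE (AllE M) * PE (OddE M)) = if n = 0 then 1 else 0 := by
  intro n
  induction n using Nat.strong_induction_on with
  | _ n ih =>
    intro M hnM
    rcases Nat.eq_zero_or_pos n with rfl | hn
    · have h1 := coeff_PE_zero (AllE M) (by simp [AllE])
      have h2 := coeff_PE_zero (OddE M) (by simp [OddE])
      rw [if_pos rfl]
      rw [PowerSeries.coeff_zero_eq_constantCoeff] at h1 h2 ⊢
      rw [map_mul, h1, h2, one_mul]
    · rw [if_neg (by omega)]
      rw [PE_all_split M]
      have : PE (OddE M) * (PE (AllE (M / 2)) * PE (AllE (M / 2))) * PE (OddE M)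
          = (PE (OddE M) * PE (AllE (M / 2))) * (PE (OddE M) * PE (AllE (M / 2))) := by ring
      rw [this, coeff_sq]
      by_cases hpar : n % 2 = 0
      · rw [if_pos hpar]
        have hle : n / 2 ≤ M / 2 := Nat.div_le_div_right hnM
        have hrepl : (coeff (n/2)) (PE (OddE M) * PE (AllE (M / 2)))
            = (coeff (n/2)) (PE (OddE (M/2)) * PE (AllE (M / 2))) := by
          apply coeff_mul_congr
          intro i hi
          apply coeff_PE_congr
          unfold OddE
          ext e
          simp only [Finset.mem_filter, Finset.mem_Icc]
          omega
        rw [hrepl, mul_comm (PE (OddE (M/2)))]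
        rw [ih (n/2) (by omega) (M/2) hle]
        rw [if_neg (by omega)]
      · rw [if_neg hpar]


-- ===== Franklin part =====


/-- Exceptional (pentagonal) partitions: `{k,...,2k-1}` and `{k+1,...,2k}`. -/
def exc (T : Finset ℕ) : Prop :=
  (∃ k : ℕ, 1 ≤ k ∧ T = Finset.Icc k (2*k-1)) ∨ (∃ k : ℕ, 1 ≤ k ∧ T = Finset.Icc (k+1) (2*k))

open Classical in
/-- Franklin's involution. -/
noncomputable def iota (T : Finset ℕ) : Finset ℕ :=
  if hT : T.Nonempty then
    if hst : ∃ i, 0 < i ∧ T.max' hT - i ∉ T then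
      if exc T then T
      else if T.min' hT ≤ Nat.find hst then
        insert (T.max' hT + 1) ((T.erase (T.min' hT)).erase (T.max' hT - T.min' hT + 1))
      else insert (T.max' hT - Nat.find hst) (insert (Nat.find hst) (T.erase (T.max' hT)))
    else T
  else T

lemma iota_caseA_eq (T : Finset ℕ) (hT : T.Nonempty) (hst : ∃ i, 0 < i ∧ T.max' hT - i ∉ T)
    (hne : ¬ exc T) (hle : T.min' hT ≤ Nat.find hst) :
    iota T = insert (T.max' hT + 1) ((T.erase (T.min' hT)).erase (T.max' hT - T.min' hT + 1)) := by
  rw [iota, dif_pos hT, dif_pos hst, if_neg hne, if_pos hle]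

lemma iota_caseB_eq (T : Finset ℕ) (hT : T.Nonempty) (hst : ∃ i, 0 < i ∧ T.max' hT - i ∉ T)
    (hne : ¬ exc T) (hgt : ¬ T.min' hT ≤ Nat.find hst) :
    iota T = insert (T.max' hT - Nat.find hst) (insert (Nat.find hst) (T.erase (T.max' hT))) := by
  rw [iota, dif_pos hT, dif_pos hst, if_neg hne, if_neg hgt]

lemma iota_exc_eq (T : Finset ℕ) (hexc : exc T) : iota T = T := by
  unfold iota
  repeat' split
  all_goals first
    | rfl
    | exact absurd hexc (by assumption)

section facts
variable {T : Finset ℕ}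

lemma hst_exists (hT : T.Nonempty) (hpos : 0 ∉ T) : ∃ i, 0 < i ∧ T.max' hT - i ∉ T := by
  refine ⟨T.max' hT, ?_, by simpa [Nat.sub_self] using hpos⟩
  have := T.max'_mem hT
  rcases Nat.eq_zero_or_pos (T.max' hT) with h | h
  · exact absurd (h ▸ this) hpos
  · exact h

lemma min'_pos (hT : T.Nonempty) (hpos : 0 ∉ T) : 1 ≤ T.min' hT := by
  have := T.min'_mem hT
  rcases Nat.eq_zero_or_pos (T.min' hT) with h | h
  · exact absurd (h ▸ this) hpos
  · exact h

/-- staircase facts -/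
lemma stair_spec (hT : T.Nonempty) (hpos : 0 ∉ T) (hst : ∃ i, 0 < i ∧ T.max' hT - i ∉ T) :
    0 < Nat.find hst ∧ Nat.find hst ≤ T.max' hT ∧ T.max' hT - Nat.find hst ∉ T ∧
      ∀ j, T.max' hT - Nat.find hst < j → j ≤ T.max' hT → j ∈ T := by
  obtain ⟨hpos', hnotmem⟩ := Nat.find_spec hst
  set m := T.max' hT with hm
  set t := Nat.find hst with htdef
  have hle : t ≤ m := by
    apply Nat.find_le
    refine ⟨?_, by simpa [Nat.sub_self] using hpos⟩
    have := T.max'_mem hT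
    rcases Nat.eq_zero_or_pos m with h | h
    · exact absurd (h ▸ this) hpos
    · exact h
  refine ⟨hpos', hle, hnotmem, ?_⟩
  intro j hj1 hj2
  rcases eq_or_lt_of_le hj2 with rfl | hj3
  · exact T.max'_mem hT
  · have hi : m - j < t := by omega
    have h2 := Nat.find_min hst hi
    push_neg at h2
    have hmem := h2 (by omega)
    have h3 : m - (m - j) = j := by omega
    rwa [h3] at hmem

end facts

set_option maxHeartbeats 1000000 in
lemma caseA (T : Finset ℕ) (hT : T.Nonempty) (hpos : 0 ∉ T) (hne : ¬ exc T)
    (hle : T.min' hT ≤ Nat.find (hst_exists hT hpos)) :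
    0 ∉ iota T ∧ (iota T).sum id = T.sum id ∧ ¬ exc (iota T) ∧ iota (iota T) = T ∧ iota T ≠ T := by
  classical
  set m := T.max' hT with hmdef
  set s := T.min' hT with hsdef
  set t := Nat.find (hst_exists hT hpos) with htdef
  obtain ⟨ht0, htm, htnot, hstair⟩ := stair_spec hT hpos (hst_exists hT hpos)
  have hs1 : 1 ≤ s := min'_pos hT hpos
  have hsm : s ≤ m := T.min'_le _ (T.max'_mem hT)
  have hmemT : ∀ x ∈ T, s ≤ x ∧ x ≤ m := fun x hx => ⟨T.min'_le x hx, T.le_max' x hx⟩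
  -- the key inequality m ≥ 2s
  have hA1 : 2 * s ≤ m := by
    by_contra hcon
    push_neg at hcon
    have hms1 : m - s + 1 ∈ T := hstair _ (by omega) (by omega)
    have h1 : s ≤ m - s + 1 := (hmemT _ hms1).1
    have heq : m = 2 * s - 1 := by omega
    have hTIcc : T = Finset.Icc s m := by
      ext x
      simp only [Finset.mem_Icc]
      constructor
      · exact fun hx => ⟨(hmemT x hx).1, (hmemT x hx).2⟩
      · rintro ⟨hx1, hx2⟩
        exact hstair x (by omega) hx2
    exact hne (Or.inl ⟨s, hs1, by rw [hTIcc, heq]⟩)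
  have hms1 : m - s + 1 ∈ T := hstair _ (by omega) (by omega)
  have hs_ne : s ≠ m - s + 1 := by omega
  have hm1_not : m + 1 ∉ T := fun h => by have := (hmemT _ h).2; omega
  -- the image set
  set T' := insert (m + 1) ((T.erase s).erase (m - s + 1)) with hT'def
  have hiota : iota T = T' := iota_caseA_eq T hT (hst_exists hT hpos) hne hle
  have hmemT' : ∀ x, x ∈ T' ↔ (x = m + 1 ∨ (x ∈ T ∧ x ≠ s ∧ x ≠ m - s + 1)) := by
    intro x
    simp only [hT'def, Finset.mem_insert, Finset.mem_erase]
    tauto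
  have hpos' : 0 ∉ T' := by
    rw [hmemT']
    push_neg
    exact ⟨by omega, fun h => absurd h hpos⟩
  have hT'ne : T'.Nonempty := ⟨m + 1, by rw [hmemT']; left; rfl⟩
  -- sum is preserved
  have hsum' : T'.sum id = T.sum id := by
    have e1 : m - s + 1 ∈ T.erase s := Finset.mem_erase.2 ⟨hs_ne.symm, hms1⟩
    have e2 : m + 1 ∉ (T.erase s).erase (m - s + 1) := by
      intro h
      have := (hmemT _ (Finset.mem_of_mem_erase (Finset.mem_of_mem_erase h))).2
      omega
    have k1 : T'.sum id = (m + 1) + ((T.erase s).erase (m - s + 1)).sum id := by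
      rw [hT'def, Finset.sum_insert e2]; rfl
    have k2 : (m - s + 1) + ((T.erase s).erase (m - s + 1)).sum id = (T.erase s).sum id :=
      Finset.add_sum_erase _ id e1
    have k3 : s + (T.erase s).sum id = T.sum id := Finset.add_sum_erase _ id (T.min'_mem hT)
    omega
  -- max' of T'
  have hub' : ∀ x ∈ T', x ≤ m + 1 := by
    intro x hx
    rw [hmemT'] at hx
    rcases hx with rfl | ⟨hx, _, _⟩
    · exact le_refl _
    · have := (hmemT _ hx).2; omega
  have hmax' : T'.max' hT'ne = m + 1 :=
    le_antisymm (Finset.max'_le _ _ _ hub') (Finset.le_max' _ _ (by rw [hmemT']; left; rfl))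
  have hgt' : ∀ x ∈ T', s < x := by
    intro x hx
    rw [hmemT'] at hx
    rcases hx with rfl | ⟨hx, hxs, _⟩
    · omega
    · have := (hmemT _ hx).1; omega
  -- the staircase steps of T'
  have hstep : ∀ i, 0 < i → i < s → m + 1 - i ∈ T' := by
    intro i hi1 hi2
    rw [hmemT']
    right
    refine ⟨hstair _ (by omega) (by omega), by omega, by omega⟩
  have hnotms1' : m - s + 1 ∉ T' := by
    intro h
    rw [hmemT'] at h
    rcases h with h | ⟨_, _, h3⟩ <;> omega
  -- find for T' equals s
  have hfind' : Nat.find (hst_exists hT'ne hpos') = s := by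
    rw [Nat.find_eq_iff]
    constructor
    · refine ⟨by omega, ?_⟩
      rw [hmax']
      have : m + 1 - s = m - s + 1 := by omega
      rw [this]
      exact hnotms1'
    · rintro i hi ⟨hi0, hinot⟩
      rw [hmax'] at hinot
      exact hinot (hstep i hi0 hi)
  -- erase facts
  have e1 : m - s + 1 ∈ T.erase s := Finset.mem_erase.2 ⟨hs_ne.symm, hms1⟩
  have e2 : m + 1 ∉ (T.erase s).erase (m - s + 1) := by
    intro h
    have := (hmemT _ (Finset.mem_of_mem_erase (Finset.mem_of_mem_erase h))).2
    omega
  -- T' is not exceptional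
  have hexc' : ¬ exc T' := by
    rintro (⟨k, hk, hEq⟩ | ⟨k, hk, hEq⟩)
    · have hm1 : m + 1 ∈ Finset.Icc k (2*k-1) := hEq ▸ (by rw [hmemT']; left; rfl : m + 1 ∈ T')
      rw [Finset.mem_Icc] at hm1
      have hms1' : ¬ (k ≤ m - s + 1 ∧ m - s + 1 ≤ 2*k-1) := by
        rw [← Finset.mem_Icc, ← hEq]
        exact hnotms1'
      have htop : 2*k-1 ≤ m + 1 := hub' _ (hEq ▸ (Finset.mem_Icc.2 ⟨by omega, le_refl _⟩))
      rcases Nat.lt_or_ge s 2 with hs2 | hs2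
      · -- s = 1
        have hmnot : m ∉ T' := by
          intro h
          rw [hmemT'] at h
          rcases h with h | ⟨h1, h2, h3⟩ <;> omega
        have hmnot' : ¬ (k ≤ m ∧ m ≤ 2*k-1) := by
          rw [← Finset.mem_Icc, ← hEq]
          exact hmnot
        omega
      · have hmem2 := hstep (s-1) (by omega) (by omega)
        rw [hEq, Finset.mem_Icc] at hmem2
        omega
    · have hm1 : m + 1 ∈ Finset.Icc (k+1) (2*k) := hEq ▸ (by rw [hmemT']; left; rfl : m + 1 ∈ T')
      rw [Finset.mem_Icc] at hm1
      have hms1' : ¬ (k + 1 ≤ m - s + 1 ∧ m - s + 1 ≤ 2*k) := by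
        rw [← Finset.mem_Icc, ← hEq]
        exact hnotms1'
      have htop : 2*k ≤ m + 1 := hub' _ (hEq ▸ (Finset.mem_Icc.2 ⟨by omega, le_refl _⟩))
      rcases Nat.lt_or_ge s 2 with hs2 | hs2
      · have hmnot : m ∉ T' := by
          intro h
          rw [hmemT'] at h
          rcases h with h | ⟨h1, h2, h3⟩ <;> omega
        have hmnot' : ¬ (k + 1 ≤ m ∧ m ≤ 2*k) := by
          rw [← Finset.mem_Icc, ← hEq]
          exact hmnot
        omega
      · have hmem2 := hstep (s-1) (by omega) (by omega)
        rw [hEq, Finset.mem_Icc] at hmem2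
        omega
  rw [hiota]
  refine ⟨hpos', hsum', hexc', ?_, ?_⟩
  · -- iota T' = T
    have hmin'gt : s < T'.min' hT'ne := hgt' _ (T'.min'_mem hT'ne)
    have hmin'gt2 : ¬ T'.min' hT'ne ≤ Nat.find (hst_exists hT'ne hpos') := by
      rw [hfind']; omega
    rw [iota_caseB_eq T' hT'ne (hst_exists hT'ne hpos') hexc' hmin'gt2]
    rw [hfind', hmax']
    have hms : m + 1 - s = m - s + 1 := by omega
    rw [hms, hT'def, Finset.erase_insert e2, Finset.insert_comm,
      Finset.insert_erase e1, Finset.insert_erase (T.min'_mem hT)]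
  · intro h
    exact hm1_not (h ▸ Finset.mem_insert_self (m+1) _)

set_option maxHeartbeats 1000000 in
lemma caseB (T : Finset ℕ) (hT : T.Nonempty) (hpos : 0 ∉ T) (hne : ¬ exc T)
    (hgt : ¬ T.min' hT ≤ Nat.find (hst_exists hT hpos)) :
    0 ∉ iota T ∧ (iota T).sum id = T.sum id ∧ ¬ exc (iota T) ∧ iota (iota T) = T ∧ iota T ≠ T := by
  classical
  set m := T.max' hT with hmdef
  set s := T.min' hT with hsdef
  set t := Nat.find (hst_exists hT hpos) with htdef
  obtain ⟨ht0, htm, htnot, hstair⟩ := stair_spec hT hpos (hst_exists hT hpos)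
  rw [← htdef] at ht0 htm htnot hstair
  rw [← hmdef] at htm htnot hstair
  push_neg at hgt
  have hs1 : 1 ≤ s := min'_pos hT hpos
  have hsm : s ≤ m := T.min'_le _ (T.max'_mem hT)
  have hmemT : ∀ x ∈ T, s ≤ x ∧ x ≤ m := fun x hx => ⟨T.min'_le x hx, T.le_max' x hx⟩
  -- the key inequality m ≥ 2t+1
  have hB1 : 2 * t + 1 ≤ m := by
    by_contra hcon
    push_neg at hcon
    have hm1t : m - t + 1 ∈ T := hstair _ (by omega) (by omega)
    have h1 : s ≤ m - t + 1 := (hmemT _ hm1t).1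
    have hseq : s = t + 1 ∧ m = 2 * t := by omega
    have hTIcc : T = Finset.Icc (t+1) (2*t) := by
      ext x
      simp only [Finset.mem_Icc]
      constructor
      · intro hx
        have := hmemT x hx
        omega
      · rintro ⟨hx1, hx2⟩
        exact hstair x (by omega) (by omega)
    exact hne (Or.inr ⟨t, by omega, hTIcc⟩)
  have hmnot_t : t ∉ T := fun h => by have := (hmemT _ h).1; omega
  set T'' := insert (m - t) (insert t (T.erase m)) with hT''def
  have hiota : iota T = T'' := iota_caseB_eq T hT (hst_exists hT hpos) hne (by omega)
  have hmemT'' : ∀ x, x ∈ T'' ↔ (x = m - t ∨ x = t ∨ (x ∈ T ∧ x ≠ m)) := by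
    intro x
    simp only [hT''def, Finset.mem_insert, Finset.mem_erase]
    tauto
  have hpos'' : 0 ∉ T'' := by
    rw [hmemT'']
    push_neg
    exact ⟨by omega, by omega, fun h => absurd h hpos⟩
  have hT''ne : T''.Nonempty := ⟨t, by rw [hmemT'']; right; left; rfl⟩
  have hsum'' : T''.sum id = T.sum id := by
    have e0 : t ∉ T.erase m := fun h => hmnot_t (Finset.mem_of_mem_erase h)
    have e1 : m - t ∉ insert t (T.erase m) := by
      simp only [Finset.mem_insert]
      push_neg
      exact ⟨by omega, fun h => htnot (Finset.mem_of_mem_erase h)⟩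
    have k1 : T''.sum id = (m - t) + (t + (T.erase m).sum id) := by
      rw [hT''def, Finset.sum_insert e1, Finset.sum_insert e0]; rfl
    have k3 : m + (T.erase m).sum id = T.sum id := Finset.add_sum_erase _ id (T.max'_mem hT)
    omega
  have hub'' : ∀ x ∈ T'', x ≤ m - 1 := by
    intro x hx
    rw [hmemT''] at hx
    rcases hx with rfl | rfl | ⟨hx, hxm⟩
    · omega
    · omega
    · have := (hmemT _ hx).2; omega
  have hm1mem : m - 1 ∈ T'' := by
    rw [hmemT'']
    rcases Nat.lt_or_ge t 2 with h | h
    · left; omega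
    · right; right
      exact ⟨hstair _ (by omega) (by omega), by omega⟩
  have hmax'' : T''.max' hT''ne = m - 1 :=
    le_antisymm (Finset.max'_le _ _ _ hub'') (Finset.le_max' _ _ hm1mem)
  have hlb'' : ∀ x ∈ T'', t ≤ x := by
    intro x hx
    rw [hmemT''] at hx
    rcases hx with rfl | rfl | ⟨hx, _⟩
    · omega
    · omega
    · have := (hmemT _ hx).1; omega
  have hmin'' : T''.min' hT''ne = t :=
    le_antisymm (Finset.min'_le _ _ (by rw [hmemT'']; right; left; rfl))
      (Finset.le_min' _ _ _ hlb'')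
  -- the staircase of T'' has length ≥ t
  have hstep'' : ∀ i, 0 < i → i < t → m - 1 - i ∈ T'' := by
    intro i hi1 hi2
    rw [hmemT'']
    rcases Nat.lt_or_ge i (t-1) with h | h
    · right; right
      exact ⟨hstair _ (by omega) (by omega), by omega⟩
    · left; omega
  have hfind'' : t ≤ Nat.find (hst_exists hT''ne hpos'') := by
    rw [Nat.le_find_iff]
    intro i hi
    rw [hmax'']
    rintro ⟨hi0, hnot⟩
    exact hnot (hstep'' i hi0 hi)
  have hexc'' : ¬ exc T'' := by
    rintro (⟨k, hk, hEq⟩ | ⟨k, hk, hEq⟩)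
    · have h1 : t ∈ Finset.Icc k (2*k-1) := hEq ▸ (by rw [hmemT'']; right; left; rfl : t ∈ T'')
      have h2 : m - 1 ∈ Finset.Icc k (2*k-1) := hEq ▸ hm1mem
      rw [Finset.mem_Icc] at h1 h2
      omega
    · have h1 : t ∈ Finset.Icc (k+1) (2*k) := hEq ▸ (by rw [hmemT'']; right; left; rfl : t ∈ T'')
      have h2 : m - 1 ∈ Finset.Icc (k+1) (2*k) := hEq ▸ hm1mem
      rw [Finset.mem_Icc] at h1 h2
      omega
  rw [hiota]
  refine ⟨hpos'', hsum'', hexc'', ?_, ?_⟩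
  · rw [iota_caseA_eq T'' hT''ne (hst_exists hT''ne hpos'') hexc'' (by rw [hmin'']; exact hfind'')]
    rw [hmin'', hmax'']
    have e0 : t ∉ insert (m - t) (T.erase m) := by
      simp only [Finset.mem_insert]
      push_neg
      exact ⟨by omega, fun h => hmnot_t (Finset.mem_of_mem_erase h)⟩
    have e1 : m - t ∉ T.erase m := fun h => htnot (Finset.mem_of_mem_erase h)
    have h1 : T''.erase t = insert (m - t) (T.erase m) := by
      rw [hT''def, Finset.insert_comm, Finset.erase_insert e0]
    rw [h1]
    have h2 : m - 1 - t + 1 = m - t := by omega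
    rw [h2, Finset.erase_insert e1]
    have h3 : m - 1 + 1 = m := by omega
    rw [h3, Finset.insert_erase (T.max'_mem hT)]
  · intro hcontra
    have : m ∈ T'' := hcontra.symm ▸ T.max'_mem hT
    rw [hmemT''] at this
    rcases this with h | h | ⟨_, h⟩ <;> omega

lemma iota_spec (T : Finset ℕ) (hT : T.Nonempty) (hpos : 0 ∉ T) (hne : ¬ exc T) :
    0 ∉ iota T ∧ (iota T).sum id = T.sum id ∧ ¬ exc (iota T) ∧ iota (iota T) = T ∧ iota T ≠ T := by
  by_cases hle : T.min' hT ≤ Nat.find (hst_exists hT hpos)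
  · exact caseA T hT hpos hne hle
  · exact caseB T hT hpos hne hle

noncomputable instance : DecidablePred exc := fun _ => Classical.propDecidable _

/-- distinct partitions of n, as finsets -/
def A (n : ℕ) : Finset (Finset ℕ) := (Finset.Icc 1 n).powerset.filter (fun T => T.sum id = n)

lemma mem_A (n : ℕ) (T : Finset ℕ) : T ∈ A n ↔ (0 ∉ T ∧ T.sum id = n) := by
  simp only [A, Finset.mem_filter, Finset.mem_powerset]
  constructor
  · rintro ⟨hsub, hsum⟩
    refine ⟨fun h0 => ?_, hsum⟩
    have := Finset.mem_Icc.1 (hsub h0)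
    omega
  · rintro ⟨hpos, hsum⟩
    refine ⟨fun x hx => Finset.mem_Icc.2 ⟨?_, ?_⟩, hsum⟩
    · rcases Nat.eq_zero_or_pos x with rfl | h
      · exact absurd hx hpos
      · exact h
    · calc x = id x := rfl
        _ ≤ T.sum id := Finset.single_le_sum (fun i _ => Nat.zero_le (id i)) hx
        _ = n := hsum

lemma card_A_parity (n : ℕ) (hn : 1 ≤ n) :
    ((A n).card : ZMod 2) = (((A n).filter exc).card : ZMod 2) := by
  classical
  have hsplit := Finset.card_filter_add_card_filter_not (s := A n) (p := exc)
  have hzero : ∑ _T ∈ (A n).filter (fun T => ¬ exc T), (1 : ZMod 2) = 0 := by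
    apply Finset.sum_involution (fun T _ => iota T)
    · intro T _
      decide
    · intro T hTmem h1
      rw [Finset.mem_filter, mem_A] at hTmem
      obtain ⟨⟨hpos, hsum⟩, hne⟩ := hTmem
      have hTne : T.Nonempty := by
        rcases Finset.eq_empty_or_nonempty T with rfl | h
        · simp at hsum; omega
        · exact h
      exact (iota_spec T hTne hpos hne).2.2.2.2
    · intro T hTmem
      rw [Finset.mem_filter, mem_A] at hTmem ⊢
      obtain ⟨⟨hpos, hsum⟩, hne⟩ := hTmem
      have hTne : T.Nonempty := by
        rcases Finset.eq_empty_or_nonempty T with rfl | h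
        · simp at hsum; omega
        · exact h
      obtain ⟨h1, h2, h3, _, _⟩ := iota_spec T hTne hpos hne
      exact ⟨⟨h1, h2.trans hsum⟩, h3⟩
    · intro T hTmem
      rw [Finset.mem_filter, mem_A] at hTmem
      obtain ⟨⟨hpos, hsum⟩, hne⟩ := hTmem
      have hTne : T.Nonempty := by
        rcases Finset.eq_empty_or_nonempty T with rfl | h
        · simp at hsum; omega
        · exact h
      exact (iota_spec T hTne hpos hne).2.2.2.1
  have hzero' : ((((A n).filter (fun T => ¬ exc T)).card : ℕ) : ZMod 2) = 0 := by
    rw [← hzero, Finset.sum_const, nsmul_eq_mul, mul_one]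
  have : (((A n).filter exc).card : ℕ) + (((A n).filter (fun T => ¬ exc T)).card : ℕ)
      = (A n).card := hsplit
  calc ((A n).card : ZMod 2)
      = ((((A n).filter exc).card : ℕ) : ZMod 2)
        + ((((A n).filter (fun T => ¬ exc T)).card : ℕ) : ZMod 2) := by
        rw [← Nat.cast_add, this]
    _ = (((A n).filter exc).card : ZMod 2) := by rw [hzero', add_zero]

/-- Gauss sum for an interval. -/
lemma two_mul_sum_Icc (a c : ℕ) :
    2 * (Finset.Icc (a+1) (a+c)).sum id = (2*a+c+1)*c := by
  induction c with
  | zero => simp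
  | succ c ih =>
    have : a + (c+1) = (a+c) + 1 := by omega
    rw [this, Finset.sum_Icc_succ_top (by omega), mul_add, ih]
    simp only [id_eq]
    ring

lemma sum_type1 (k : ℕ) (hk : 1 ≤ k) : 2 * (Finset.Icc k (2*k-1)).sum id = k*(3*k-1) := by
  have h := two_mul_sum_Icc (k-1) k
  rw [show k-1+1 = k by omega, show k-1+k = 2*k-1 by omega,
    show 2*(k-1)+k+1 = 3*k-1 by omega] at h
  rw [h, mul_comm]

lemma sum_type2 (k : ℕ) (hk : 1 ≤ k) : 2 * (Finset.Icc (k+1) (2*k)).sum id = k*(3*k+1) := by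
  have h2 : 2*k = k + k := by omega
  rw [h2, two_mul_sum_Icc k k]
  have h3 : 2*k+k+1 = 3*k+1 := by omega
  rw [h3, mul_comm]

lemma uniq1 {k k' : ℕ} (hk : 1 ≤ k) (hk' : 1 ≤ k') (h : k*(3*k-1) = k'*(3*k'-1)) : k = k' := by
  obtain ⟨a, rfl⟩ : ∃ a, k = a + 1 := ⟨k-1, by omega⟩
  obtain ⟨b, rfl⟩ : ∃ b, k' = b + 1 := ⟨k'-1, by omega⟩
  rw [show 3*(a+1)-1 = 3*a+2 by omega, show 3*(b+1)-1 = 3*b+2 by omega] at h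
  rcases lt_trichotomy a b with hab | hab | hab
  · nlinarith
  · omega
  · nlinarith

lemma uniq2 {k k' : ℕ} (hk : 1 ≤ k) (hk' : 1 ≤ k') (h : k*(3*k+1) = k'*(3*k'+1)) : k = k' := by
  rcases lt_trichotomy k k' with hab | hab | hab
  · nlinarith
  · omega
  · nlinarith

lemma disj12 {k j : ℕ} (hk : 1 ≤ k) (hj : 1 ≤ j) : k*(3*k-1) ≠ j*(3*j+1) := by
  obtain ⟨a, rfl⟩ : ∃ a, k = a + 1 := ⟨k-1, by omega⟩
  rw [show 3*(a+1)-1 = 3*a+2 by omega]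
  intro h
  rcases le_or_gt (a+1) j with hab | hab
  · nlinarith
  · nlinarith

def pent1 (n : ℕ) : Prop := ∃ k : ℕ, 1 ≤ k ∧ 2*n = k*(3*k-1)
def pent2 (n : ℕ) : Prop := ∃ k : ℕ, 1 ≤ k ∧ 2*n = k*(3*k+1)

noncomputable instance : DecidablePred pent1 := fun _ => Classical.propDecidable _
noncomputable instance : DecidablePred pent2 := fun _ => Classical.propDecidable _
noncomputable instance (n : ℕ) : Decidable (pent1 n ∨ pent2 n) := Classical.propDecidable _

lemma filter_exc_card (n : ℕ) (hn : 1 ≤ n) :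
    ((A n).filter exc).card = if pent1 n ∨ pent2 n then 1 else 0 := by
  classical
  by_cases hp : pent1 n ∨ pent2 n
  · rw [if_pos hp]
    rcases hp with ⟨k, hk, hkn⟩ | ⟨k, hk, hkn⟩
    · have hkey : (A n).filter exc = {Finset.Icc k (2*k-1)} := by
        ext T
        simp only [Finset.mem_filter, Finset.mem_singleton]
        constructor
        · rintro ⟨hTA, ⟨k', hk', rfl⟩ | ⟨k', hk', rfl⟩⟩
          · have hsumT := (mem_A _ _ |>.1 hTA).2
            have := sum_type1 k' hk'
            have hkk : k' = k := uniq1 hk' hk (by omega)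
            rw [hkk]
          · have hsumT := (mem_A _ _ |>.1 hTA).2
            have := sum_type2 k' hk'
            exact absurd (show k*(3*k-1) = k'*(3*k'+1) by omega) (disj12 hk hk')
        · rintro rfl
          refine ⟨(mem_A _ _).2 ⟨?_, ?_⟩, Or.inl ⟨k, hk, rfl⟩⟩
          · intro h0
            have := Finset.mem_Icc.1 h0
            omega
          · have := sum_type1 k hk
            omega
      rw [hkey, Finset.card_singleton]
    · have hkey : (A n).filter exc = {Finset.Icc (k+1) (2*k)} := by
        ext T
        simp only [Finset.mem_filter, Finset.mem_singleton]
        constructor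
        · rintro ⟨hTA, ⟨k', hk', rfl⟩ | ⟨k', hk', rfl⟩⟩
          · have hsumT := (mem_A _ _ |>.1 hTA).2
            have := sum_type1 k' hk'
            exact absurd (show k'*(3*k'-1) = k*(3*k+1) by omega) (disj12 hk' hk)
          · have hsumT := (mem_A _ _ |>.1 hTA).2
            have := sum_type2 k' hk'
            have hkk : k' = k := uniq2 hk' hk (by omega)
            rw [hkk]
        · rintro rfl
          refine ⟨(mem_A _ _).2 ⟨?_, ?_⟩, Or.inr ⟨k, hk, rfl⟩⟩
          · intro h0
            have := Finset.mem_Icc.1 h0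
            omega
          · have := sum_type2 k hk
            omega
      rw [hkey, Finset.card_singleton]
  · rw [if_neg hp]
    rw [Finset.card_eq_zero]
    rw [Finset.filter_eq_empty_iff]
    rintro T hTA (⟨k, hk, rfl⟩ | ⟨k, hk, rfl⟩)
    · have hsumT := (mem_A _ _ |>.1 hTA).2
      have := sum_type1 k hk
      exact hp (Or.inl ⟨k, hk, by omega⟩)
    · have hsumT := (mem_A _ _ |>.1 hTA).2
      have := sum_type2 k hk
      exact hp (Or.inr ⟨k, hk, by omega⟩)

/-- the ℤ-condition matches pent1 ∨ pent2 -/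
lemma pent_int (n : ℕ) (hn : 1 ≤ n) :
    (∃ k : ℤ, 2*(n:ℤ) = k*(3*k-1)) ↔ (pent1 n ∨ pent2 n) := by
  constructor
  · rintro ⟨k, hk⟩
    rcases lt_trichotomy k 0 with hneg | rfl | hposk
    · right
      refine ⟨(-k).toNat, by omega, ?_⟩
      have hcast : ((-k).toNat : ℤ) = -k := Int.toNat_of_nonneg (by omega)
      have h2 : 2*(n:ℤ) = (-k) * (3*(-k)+1) := by ring_nf; ring_nf at hk; linarith
      have : ((2*n : ℕ) : ℤ) = (((-k).toNat * (3*(-k).toNat+1) : ℕ) : ℤ) := by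
        push_cast [hcast]
        linarith [h2]
      have := Nat.cast_injective (R := ℤ) this
      omega
    · simp at hk; omega
    · left
      refine ⟨k.toNat, by omega, ?_⟩
      have hcast : (k.toNat : ℤ) = k := Int.toNat_of_nonneg (by omega)
      have : ((2*n : ℕ) : ℤ) = ((k.toNat * (3*k.toNat-1) : ℕ) : ℤ) := by
        push_cast [hcast, Nat.cast_sub (show 1 ≤ 3*k.toNat by omega)]
        push_cast [hcast]
        linarith [hk]
      have := Nat.cast_injective (R := ℤ) this
      omega
  · rintro (⟨k, hk, hkn⟩ | ⟨k, hk, hkn⟩)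
    · refine ⟨(k:ℤ), ?_⟩
      have : ((2*n : ℕ) : ℤ) = ((k*(3*k-1) : ℕ) : ℤ) := by rw [hkn]
      push_cast [Nat.cast_sub (show 1 ≤ 3*k by omega)] at this
      linarith
    · refine ⟨-(k:ℤ), ?_⟩
      have : ((2*n : ℕ) : ℤ) = ((k*(3*k+1) : ℕ) : ℤ) := by rw [hkn]
      push_cast at this
      ring_nf
      ring_nf at this
      linarith



open Classical in
noncomputable def hseq (n : ℕ) : R2 := if ∃ k : ℤ, 2*(n:ℤ) = k*(3*k-1) then 1 else 0
open Classical in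
noncomputable def gseq (n : ℕ) : R2 := if ∃ k : ℤ, (n:ℤ) = k*(3*k-1) then 1 else 0

lemma hseq_zero : hseq 0 = 1 := by
  rw [hseq, if_pos ⟨0, by ring⟩]

/-- Pentagonal number theorem mod 2. -/
lemma pnt (n M : ℕ) (h : n ≤ M) : (coeff n) (PE (AllE M)) = hseq n := by
  classical
  rw [coeff_PE]
  have hsetEq : (AllE M).powerset.filter (fun T => T.sum id = n) = A n := by
    unfold AllE A
    ext T
    simp only [Finset.mem_filter, Finset.mem_powerset]
    constructor
    · rintro ⟨hsub, hsum⟩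
      refine ⟨fun x hx => ?_, hsum⟩
      have h1 := Finset.mem_Icc.1 (hsub hx)
      have h2 : id x ≤ T.sum id := Finset.single_le_sum (fun i _ => Nat.zero_le (id i)) hx
      rw [hsum] at h2
      simp only [id_eq] at h2
      exact Finset.mem_Icc.2 ⟨h1.1, h2⟩
    · rintro ⟨hsub, hsum⟩
      refine ⟨fun x hx => ?_, hsum⟩
      have h1 := Finset.mem_Icc.1 (hsub hx)
      exact Finset.mem_Icc.2 ⟨h1.1, by omega⟩
  rw [hsetEq]
  rcases Nat.eq_zero_or_pos n with rfl | hn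
  · have hA0 : A 0 = {∅} := by
      unfold A
      rfl
    rw [hA0, hseq_zero, Finset.card_singleton, Nat.cast_one]
  · rw [card_A_parity n hn, filter_exc_card n hn, hseq]
    rw [if_congr (pent_int n hn) rfl rfl]
    by_cases hp : pent1 n ∨ pent2 n
    · rw [if_pos hp, if_pos hp, Nat.cast_one]
    · rw [if_neg hp, if_neg hp, Nat.cast_zero]

lemma even_pent (k : ℤ) : Even (k*(3*k-1)) := by
  rcases Int.even_or_odd k with he | ho
  · exact he.mul_right _
  · have : Even (3*k-1) := by
      rcases ho with ⟨m, rfl⟩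
      exact ⟨3*m+1, by ring⟩
    exact this.mul_left _

lemma mkg_eq_sq : PowerSeries.mk gseq = PowerSeries.mk hseq * PowerSeries.mk hseq := by
  classical
  ext n
  rw [coeff_mk, coeff_sq, coeff_mk]
  by_cases hpar : n % 2 = 0
  · rw [if_pos hpar, gseq, hseq]
    have hcast : (n:ℤ) = 2*((n/2 : ℕ) : ℤ) := by push_cast; omega
    apply if_congr _ rfl rfl
    rw [hcast]
  · rw [if_neg hpar, gseq, if_neg]
    rintro ⟨k, hk⟩
    obtain ⟨m, hm⟩ := even_pent k
    have : (n:ℤ) = 2*m := by omega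
    omega

/-- Exponents ≡ 2 mod 4, up to M. -/
def TwoE (M : ℕ) : Finset ℕ := (Finset.Icc 1 M).filter (fun e => e % 4 = 2)
def GoodE (M : ℕ) : Finset ℕ := (Finset.Icc 1 M).filter (fun e => ¬ e % 4 = 2)

lemma twoE_eq (M : ℕ) : TwoE (2*M) = (OddE M).image (fun e => 2*e) := by
  unfold TwoE OddE
  ext e
  simp only [Finset.mem_filter, Finset.mem_Icc, Finset.mem_image]
  constructor
  · rintro ⟨⟨h1, h2⟩, h3⟩
    exact ⟨e/2, ⟨by omega, by omega⟩, by omega⟩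
  · rintro ⟨j, ⟨⟨hj1, hj2⟩, hj3⟩, rfl⟩
    omega

lemma coreE (n M : ℕ) (h : n ≤ M) :
    (coeff n) (PowerSeries.mk gseq * PE (TwoE (2*M))) = if n = 0 then 1 else 0 := by
  have hsplit : PowerSeries.mk gseq * PE (TwoE (2*M))
      = (PowerSeries.mk hseq * PE (OddE M)) * (PowerSeries.mk hseq * PE (OddE M)) := by
    rw [twoE_eq, PE_sq, mkg_eq_sq]; ring
  rw [hsplit, coeff_sq]
  have hkey : ∀ m : ℕ, m ≤ M →
      (coeff m) (PowerSeries.mk hseq * PE (OddE M)) = if m = 0 then 1 else 0 := by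
    intro m hm
    have hagree : ∀ i, i ≤ m → (coeff i) (PowerSeries.mk hseq) = (coeff i) (PE (AllE M)) :=
      fun i hi => by rw [coeff_mk]; exact (pnt i M (le_trans hi hm)).symm
    rw [coeff_mul_congr m hagree]
    exact euler m M hm
  by_cases hpar : n % 2 = 0
  · rw [if_pos hpar, hkey (n/2) (by omega)]
    by_cases hz : n = 0
    · rw [if_pos (by omega : n/2 = 0), if_pos hz]
    · rw [if_neg (by omega : ¬ n/2 = 0), if_neg hz]
  · rw [if_neg hpar, if_neg (by omega : ¬ n = 0)]

/-- The main identity: g satisfies the same recurrences as c. -/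
lemma main_identity (N : ℕ) :
    (coeff N) (PowerSeries.mk gseq * PE (AllE (N+1)))
      = (coeff N) (PE (GoodE (4*N+4))) := by
  classical
  set M := 2*(N+1) with hMdef
  have step1 : (coeff N) (PowerSeries.mk gseq * PE (AllE (N+1)))
      = (coeff N) (PowerSeries.mk gseq * PE (AllE M)) := by
    rw [mul_comm, mul_comm (PowerSeries.mk gseq)]
    apply coeff_mul_congr
    intro i hi
    apply coeff_PE_congr
    unfold AllE
    ext e
    simp only [Finset.mem_filter, Finset.mem_Icc]
    omega
  have step2 : PE (AllE M) = PE (GoodE M) * PE (TwoE M) := by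
    unfold PE AllE GoodE TwoE
    rw [← Finset.prod_filter_mul_prod_filter_not (Finset.Icc 1 M) (fun e => ¬ e % 4 = 2)]
    congr 1
    apply Finset.prod_congr _ (fun _ _ => rfl)
    apply Finset.filter_congr
    intro e _
    simp
  rw [step1, step2, show PowerSeries.mk gseq * (PE (GoodE M) * PE (TwoE M))
      = (PowerSeries.mk gseq * PE (TwoE M)) * PE (GoodE M) by ring]
  rw [coeff_mul_delta N (fun i hi => coreE i (N+1) (by omega))]
  apply coeff_PE_congr
  unfold GoodE
  ext e
  simp only [Finset.mem_filter, Finset.mem_Icc]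
  omega


lemma lhs_prod (N : ℕ) :
    (∏ n ∈ Finset.range (N+1), (1 - X^(n+1) : PowerSeries R2)) = PE (AllE (N+1)) := by
  have hfac : ∀ e : ℕ, (1 - X^e : PowerSeries R2) = 1 + X^e := by
    intro e
    linear_combination (-(X^e : PowerSeries R2)) * two_eq_zero
  induction N with
  | zero =>
    rw [Finset.prod_range_one, hfac]
    unfold PE AllE
    rw [Finset.Icc_self, Finset.prod_singleton]
  | succ N ih =>
    rw [Finset.prod_range_succ, ih, hfac]
    have hset : AllE (N+1+1) = insert (N+2) (AllE (N+1)) := by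
      unfold AllE
      ext e
      simp only [Finset.mem_insert, Finset.mem_Icc]
      omega
    rw [hset]
    unfold PE
    rw [Finset.prod_insert (by simp [AllE])]
    ring

lemma rhs_prod (N : ℕ) :
    (∏ n ∈ Finset.range (N+1),
      ((1 - X^(4*(n+1))) * (1 + X^(4*n+1)) * (1 + X^(4*n+3)) : PowerSeries R2))
      = PE (GoodE (4*N+4)) := by
  have hfac : ∀ e : ℕ, (1 - X^e : PowerSeries R2) = 1 + X^e := by
    intro e
    linear_combination (-(X^e : PowerSeries R2)) * two_eq_zero
  induction N with
  | zero =>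
    rw [Finset.prod_range_one, hfac]
    have h1 : GoodE 4 = {1, 3, 4} := by decide
    rw [h1]
    unfold PE
    rw [Finset.prod_insert (by decide), Finset.prod_insert (by decide), Finset.prod_singleton]
    ring
  | succ N ih =>
    rw [Finset.prod_range_succ, ih, hfac]
    have hset : GoodE (4*(N+1)+4)
        = insert (4*N+8) (insert (4*N+7) (insert (4*N+5) (GoodE (4*N+4)))) := by
      unfold GoodE
      ext e
      simp only [Finset.mem_insert, Finset.mem_filter, Finset.mem_Icc]
      omega
    rw [hset]
    unfold PE
    rw [Finset.prod_insert, Finset.prod_insert, Finset.prod_insert]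
    · have he1 : 4*(N+1+1) = 4*N+8 := by ring_nf
      have he2 : 4*(N+1)+1 = 4*N+5 := by ring_nf
      have he3 : 4*(N+1)+3 = 4*N+7 := by ring_nf
      rw [he1, he2, he3]
      ring
    · simp only [GoodE, Finset.mem_filter, Finset.mem_Icc]
      omega
    · simp only [Finset.mem_insert, GoodE, Finset.mem_filter, Finset.mem_Icc]
      omega
    · simp only [Finset.mem_insert, GoodE, Finset.mem_filter, Finset.mem_Icc]
      omega

lemma unique_seq (c : ℕ → R2)
    (H : ∀ N, (coeff N) (PowerSeries.mk c * PE (AllE (N+1)))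
      = (coeff N) (PowerSeries.mk gseq * PE (AllE (N+1)))) :
    ∀ n, c n = gseq n := by
  intro n
  induction n using Nat.strong_induction_on with
  | _ n ih =>
    have h := H n
    rw [coeff_mul, coeff_mul] at h
    have hmem : ((n, 0) : ℕ × ℕ) ∈ Finset.HasAntidiagonal.antidiagonal n := by
      rw [Finset.HasAntidiagonal.mem_antidiagonal]
      omega
    rw [← Finset.add_sum_erase _ _ hmem, ← Finset.add_sum_erase _ _ hmem] at h
    have hrest : ∑ p ∈ (Finset.HasAntidiagonal.antidiagonal n).erase (n, 0),
          (coeff p.1) (PowerSeries.mk c) * (coeff p.2) (PE (AllE (n+1)))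
        = ∑ p ∈ (Finset.HasAntidiagonal.antidiagonal n).erase (n, 0),
          (coeff p.1) (PowerSeries.mk gseq) * (coeff p.2) (PE (AllE (n+1))) := by
      refine Finset.sum_congr rfl fun p hp => ?_
      rw [Finset.mem_erase, Finset.HasAntidiagonal.mem_antidiagonal] at hp
      have hlt : p.1 < n := by
        rcases Nat.lt_or_ge p.1 n with h1 | h1
        · exact h1
        · exfalso
          apply hp.1
          have : p.1 = n := by omega
          have h2 : p.2 = 0 := by omega
          rw [Prod.ext_iff]
          exact ⟨this, h2⟩
      rw [coeff_mk, coeff_mk, ih p.1 hlt]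
    rw [hrest] at h
    have h2 := add_right_cancel h
    rw [coeff_mk, coeff_mk, coeff_PE_zero _ (by simp [AllE])] at h2
    simpa using h2


lemma transfer (C : ℕ → ℤ)
    (hC : ∀ N : ℕ, PowerSeries.coeff N
      ((PowerSeries.mk fun n => C n) *
        ∏ n ∈ Finset.range (N + 1), (1 - (PowerSeries.X : PowerSeries ℤ) ^ (n + 1))) =
      PowerSeries.coeff N
      (∏ n ∈ Finset.range (N + 1),
        ((1 - (PowerSeries.X : PowerSeries ℤ) ^ (4 * (n + 1))) *
          (1 + PowerSeries.X ^ (4 * n + 1)) * (1 + PowerSeries.X ^ (4 * n + 3)))))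
    (N : ℕ) :
    (coeff N) (PowerSeries.mk (fun n => ((C n : ℤ) : R2)) * PE (AllE (N+1)))
      = (coeff N) (PowerSeries.mk gseq * PE (AllE (N+1))) := by
  have e1 : PowerSeries.map (Int.castRingHom R2)
        ((PowerSeries.mk fun n => C n) *
          ∏ n ∈ Finset.range (N + 1), (1 - (PowerSeries.X : PowerSeries ℤ) ^ (n + 1)))
      = PowerSeries.mk (fun n => ((C n : ℤ) : R2)) *
          ∏ n ∈ Finset.range (N+1), (1 - X^(n+1) : PowerSeries R2) := by
    rw [map_mul, map_prod]
    have a1 : PowerSeries.map (Int.castRingHom R2) (PowerSeries.mk fun n => C n)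
        = PowerSeries.mk (fun n => ((C n : ℤ) : R2)) := by
      ext m
      simp [PowerSeries.coeff_map]
    have a2 : ∀ n ∈ Finset.range (N+1),
        PowerSeries.map (Int.castRingHom R2) (1 - (PowerSeries.X : PowerSeries ℤ)^(n+1))
          = (1 - X^(n+1) : PowerSeries R2) := fun n _ => by
      rw [map_sub, map_one, map_pow, PowerSeries.map_X]
    rw [a1, Finset.prod_congr rfl a2]
  have e2 : PowerSeries.map (Int.castRingHom R2)
        (∏ n ∈ Finset.range (N + 1),
          ((1 - (PowerSeries.X : PowerSeries ℤ) ^ (4 * (n + 1))) *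
            (1 + PowerSeries.X ^ (4 * n + 1)) * (1 + PowerSeries.X ^ (4 * n + 3))))
      = ∏ n ∈ Finset.range (N+1),
          ((1 - X^(4*(n+1))) * (1 + X^(4*n+1)) * (1 + X^(4*n+3)) : PowerSeries R2) := by
    rw [map_prod]
    refine Finset.prod_congr rfl fun n _ => ?_
    rw [map_mul, map_mul, map_sub, map_add, map_add, map_one, map_pow, map_pow, map_pow,
      PowerSeries.map_X]
  calc (coeff N) (PowerSeries.mk (fun n => ((C n : ℤ) : R2)) * PE (AllE (N+1)))
      = (coeff N) (PowerSeries.map (Int.castRingHom R2)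
          ((PowerSeries.mk fun n => C n) *
            ∏ n ∈ Finset.range (N + 1), (1 - (PowerSeries.X : PowerSeries ℤ) ^ (n + 1)))) := by
        rw [e1, lhs_prod]
    _ = (Int.castRingHom R2) ((PowerSeries.coeff N)
          ((PowerSeries.mk fun n => C n) *
            ∏ n ∈ Finset.range (N + 1), (1 - (PowerSeries.X : PowerSeries ℤ) ^ (n + 1)))) := by
        rw [PowerSeries.coeff_map]
    _ = (Int.castRingHom R2) ((PowerSeries.coeff N)
          (∏ n ∈ Finset.range (N + 1),
            ((1 - (PowerSeries.X : PowerSeries ℤ) ^ (4 * (n + 1))) *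
              (1 + PowerSeries.X ^ (4 * n + 1)) * (1 + PowerSeries.X ^ (4 * n + 3))))) := by
        rw [hC N]
    _ = (coeff N) (PowerSeries.map (Int.castRingHom R2)
          (∏ n ∈ Finset.range (N + 1),
            ((1 - (PowerSeries.X : PowerSeries ℤ) ^ (4 * (n + 1))) *
              (1 + PowerSeries.X ^ (4 * n + 1)) * (1 + PowerSeries.X ^ (4 * n + 3))))) := by
        rw [PowerSeries.coeff_map]
    _ = (coeff N) (PE (GoodE (4*N+4))) := by rw [e2, rhs_prod]
    _ = (coeff N) (PowerSeries.mk gseq * PE (AllE (N+1))) := (main_identity N).symm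

end C41
end

/-- For `n ≥ 1`: `C̄₄₁(n) ≡ 1 (mod 2)` if `n = k(3k - 1)` for some integer `k`, and
`C̄₄₁(n) ≡ 0 (mod 2)` otherwise. -/
theorem C41_mod_two (C : ℕ → ℤ)
    (hC : ∀ N : ℕ, PowerSeries.coeff N
      ((PowerSeries.mk fun n => C n) *
        ∏ n ∈ Finset.range (N + 1), (1 - (PowerSeries.X : PowerSeries ℤ) ^ (n + 1))) =
      PowerSeries.coeff N
      (∏ n ∈ Finset.range (N + 1),
        ((1 - (PowerSeries.X : PowerSeries ℤ) ^ (4 * (n + 1))) *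
          (1 + PowerSeries.X ^ (4 * n + 1)) * (1 + PowerSeries.X ^ (4 * n + 3)))))
    (n : ℕ) (hn : 1 ≤ n) :
    ((∃ k : ℤ, (n : ℤ) = k * (3 * k - 1)) → C n ≡ 1 [ZMOD 2]) ∧
    (¬ (∃ k : ℤ, (n : ℤ) = k * (3 * k - 1)) → C n ≡ 0 [ZMOD 2]) := by
  have hcg : ∀ m, ((C m : ℤ) : C41.R2) = C41.gseq m :=
    C41.unique_seq _ (fun N => C41.transfer C hC N)
  constructor
  · intro hex
    have h1 : ((C n : ℤ) : ZMod 2) = ((1 : ℤ) : ZMod 2) := by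
      rw [Int.cast_one, hcg n]
      simp only [C41.gseq]
      rw [if_pos hex]
    exact (ZMod.intCast_eq_intCast_iff _ _ _).1 h1
  · intro hex
    have h1 : ((C n : ℤ) : ZMod 2) = ((0 : ℤ) : ZMod 2) := by
      rw [Int.cast_zero, hcg n]
      simp only [C41.gseq]
      rw [if_neg hex]
    exact (ZMod.intCast_eq_intCast_iff _ _ _).1 h1
end

section
/- Let p be a prime and let r be an integer with 1 ≤ r ≤ p−1 such that 12r+1 is a quadratic nonresidue modulo p (i.e., there is no integer x with x^2 ≡ 12r+1 (mod p)). Then for all integers m ≥ 0, C̄_{4,1}(pm + r) ≡ 0 (mod 2). -/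
open Finset PowerSeries

abbrev R2 := ZMod 2
abbrev PS := PowerSeries R2

lemma add_self_ps (a : PS) : a + a = 0 := by
  calc a + a = ((2:R2) • a) := by rw [two_smul]
  _ = 0 := by rw [show (2:R2) = 0 from rfl, zero_smul]

lemma sub_eq_add_ps (a b : PS) : a - b = a + b := by
  linear_combination (norm := ring_nf) - add_self_ps b

lemma mul_pow_le_iff (K m : ℕ) (hm1 : 1 ≤ m) (hmK : m ≤ K) (i : ℕ) :
    (m * 2 ^ i ≤ K ↔ i < Nat.log 2 (K / m) + 1) := by
  have hdiv : K / m ≠ 0 := by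
    have := Nat.one_le_div_iff (by omega : 0 < m) |>.mpr hmK
    omega
  rw [Nat.lt_succ_iff, Nat.le_log_iff_pow_le (by norm_num) hdiv,
    Nat.le_div_iff_mul_le (by omega : 0 < m), mul_comm]

lemma coeff_drop (F : PS) (k i : ℕ) (h : i < k) :
    (PowerSeries.coeff (R := R2) i) (F * (1 + X ^ k)) = coeff (R := R2) i F := by
  rw [mul_add, mul_one, map_add, PowerSeries.coeff_mul_X_pow' F k i, if_neg (by omega)]
  simp

lemma coeff_drop_prod (F : PS) (u : Finset ℕ) (e : ℕ → ℕ) (i : ℕ)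
    (h : ∀ a ∈ u, i < e a) :
    coeff (R := R2) i (F * ∏ a ∈ u, (1 + X ^ e a)) = coeff (R := R2) i F := by
  classical
  induction u using Finset.induction with
  | empty => simp
  | @insert a u' hx ih =>
    rw [Finset.prod_insert hx, mul_comm (1 + X ^ e a), ← mul_assoc, coeff_drop _ _ _ (h a (by simp))]
    exact ih (fun b hb => h b (by simp [hb]))

lemma coeff_mul_prod_subset (F : PS) (e : ℕ → ℕ) {s t : Finset ℕ} (hts : t ⊆ s) (i : ℕ)
    (h : ∀ j ∈ s, j ∉ t → i < e j) :
    coeff (R := R2) i (F * ∏ j ∈ s, (1 + X ^ e j)) = coeff (R := R2) i (F * ∏ j ∈ t, (1 + X ^ e j)) := by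
  rw [← Finset.prod_sdiff hts, show F * ((∏ j ∈ s \ t, (1 + X ^ e j)) * ∏ j ∈ t, (1 + X ^ e j))
      = (F * ∏ j ∈ t, (1 + X ^ e j)) * ∏ j ∈ s \ t, (1 + X ^ e j) by ring]
  exact coeff_drop_prod _ _ _ _ (fun a ha => h a (Finset.mem_sdiff.mp ha).1 (Finset.mem_sdiff.mp ha).2)

lemma coeff_mul_congr (A B G : PS) (N : ℕ) (h : ∀ i ≤ N, coeff (R := R2) i A = coeff (R := R2) i B) :
    coeff (R := R2) N (A * G) = coeff (R := R2) N (B * G) := by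
  rw [PowerSeries.coeff_mul, PowerSeries.coeff_mul]
  refine Finset.sum_congr rfl fun p hp => ?_
  rw [Finset.HasAntidiagonal.mem_antidiagonal] at hp
  rw [h p.1 (by omega)]

lemma coeff_count (s : Finset ℕ) (e : ℕ → ℕ) (n : ℕ) :
    coeff (R := R2) n (∏ k ∈ s, (1 + X ^ e k)) =
      ((s.powerset.filter (fun t => ∑ k ∈ t, e k = n)).card : R2) := by
  classical
  have : ∀ k ∈ s, (1 + X ^ e k : PS) = X ^ e k + 1 := fun _ _ => by ring
  rw [Finset.prod_congr rfl this, Finset.prod_add]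
  simp only [Finset.prod_const_one, mul_one, Finset.prod_pow_eq_pow_sum]
  rw [map_sum]
  rw [Finset.card_filter]
  push_cast
  refine Finset.sum_congr rfl fun t ht => ?_
  rw [PowerSeries.coeff_X_pow]
  by_cases hh : ∑ k ∈ t, e k = n
  · simp [hh]
  · rw [if_neg (fun h => hh h.symm), if_neg hh]

lemma constcoeff_prod (s : Finset ℕ) (e : ℕ → ℕ) (h : ∀ j ∈ s, 1 ≤ e j) :
    PowerSeries.constantCoeff (R := R2) (∏ j ∈ s, (1 + X ^ e j)) = 1 := by
  rw [map_prod]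
  rw [Finset.prod_congr rfl (fun j hj => ?_), Finset.prod_const_one]
  rw [map_add, map_one, map_pow, PowerSeries.constantCoeff_X,
    zero_pow (by have := h j hj; omega), add_zero]

lemma euler_tel (u : PS) (J : ℕ) :
    (1 + u) * ∏ i ∈ range J, (1 + u ^ (2 ^ i)) = 1 + u ^ (2 ^ J) := by
  induction J with
  | zero => simp
  | succ J ih =>
    rw [Finset.prod_range_succ, ← mul_assoc, ih]
    have h2 : (2:ℕ) ^ (J+1) = 2 ^ J + 2 ^ J := by omega
    rw [h2, pow_add]
    linear_combination add_self_ps (u ^ 2 ^ J)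

lemma euler_prod (t : PS) (K : ℕ) :
    (∏ k ∈ Icc 1 K, (1 + t ^ k)) * ∏ m ∈ (Icc 1 K).filter (fun m => Odd m), (1 + t ^ m)
    = ∏ m ∈ (Icc 1 K).filter (fun m => Odd m),
        (1 + t ^ (m * 2 ^ (Nat.log 2 (K / m) + 1))) := by
  have key : ∀ m ∈ (Icc 1 K).filter (fun m => Odd m), ∀ i : ℕ,
      (m * 2 ^ i ≤ K ↔ i < Nat.log 2 (K / m) + 1) := by
    intro m hm i
    simp only [mem_filter, mem_Icc] at hm
    exact mul_pow_le_iff K m hm.1.1 hm.1.2 i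
  -- step 1 : reindex
  have step1 : (∏ k ∈ Icc 1 K, (1 + t ^ k)) =
      ∏ m ∈ (Icc 1 K).filter (fun m => Odd m),
        ∏ i ∈ range (Nat.log 2 (K / m) + 1), (1 + t ^ (m * 2 ^ i)) := by
    rw [Finset.prod_sigma']
    refine Finset.prod_nbij' (fun k => ⟨ordCompl[2] k, (k.factorization) 2⟩)
      (fun x => x.1 * 2 ^ x.2) ?_ ?_ ?_ ?_ ?_
    · intro k hk
      simp only [mem_Icc] at hk
      have hk0 : k ≠ 0 := by omega
      simp only [Finset.mem_sigma, mem_filter, mem_Icc, Finset.mem_range]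
      have hodd : Odd (ordCompl[2] k) := by
        rcases Nat.even_or_odd (ordCompl[2] k) with he | ho
        · exfalso
          exact Nat.not_dvd_ordCompl Nat.prime_two hk0 he.two_dvd
        · exact ho
      have hle : ordCompl[2] k ≤ k := Nat.ordCompl_le k 2
      have hpos : 0 < ordCompl[2] k := Nat.ordCompl_pos 2 hk0
      refine ⟨⟨⟨hpos, by omega⟩, hodd⟩, ?_⟩
      rw [← key _ (by simp only [mem_filter, mem_Icc]; exact ⟨⟨hpos, by omega⟩, hodd⟩)]
      rw [mul_comm, Nat.ordProj_mul_ordCompl_eq_self k 2]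
      omega
    · intro x hx
      simp only [Finset.mem_sigma, mem_filter, mem_Icc, Finset.mem_range] at hx
      have := (key x.1 (by simp only [mem_filter, mem_Icc]; exact hx.1) x.2).mpr hx.2
      simp only [mem_Icc]
      constructor
      · have : 1 ≤ x.1 := hx.1.1.1
        have : 0 < 2 ^ x.2 := Nat.pow_pos (by norm_num)
        nlinarith
      · exact this
    · intro k hk
      show k / 2 ^ (k.factorization 2) * 2 ^ (k.factorization 2) = k
      rw [mul_comm]
      exact Nat.ordProj_mul_ordCompl_eq_self k 2
    · intro x hx
      simp only [Finset.mem_sigma, mem_filter, mem_Icc, Finset.mem_range] at hx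
      have hxodd := hx.1.2
      have hx1 : x.1 ≠ 0 := by omega
      have hfact : (x.1 * 2 ^ x.2).factorization 2 = x.2 := by
        rw [Nat.factorization_mul hx1 (by positivity)]
        simp [Nat.Prime.factorization_pow, Nat.Prime.factorization_self Nat.prime_two,
          Nat.factorization_eq_zero_of_not_dvd (by
            intro h; exact (Nat.not_even_iff_odd.mpr hxodd) (even_iff_two_dvd.mpr h))]
      have hcompl : ordCompl[2] (x.1 * 2 ^ x.2) = x.1 := by
        rw [hfact, Nat.mul_div_cancel _ (by positivity)]
      exact Sigma.ext (by simpa using hcompl) (by simp [hfact])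
    · intro k hk
      have hh : k / 2 ^ (k.factorization 2) * 2 ^ (k.factorization 2) = k := by
        rw [mul_comm]; exact Nat.ordProj_mul_ordCompl_eq_self k 2
      simp only []
      rw [hh]
  rw [step1, ← Finset.prod_mul_distrib]
  refine Finset.prod_congr rfl fun m hm => ?_
  have := euler_tel (t ^ m) (Nat.log 2 (K / m) + 1)
  calc (∏ i ∈ range (Nat.log 2 (K / m) + 1), (1 + t ^ (m * 2 ^ i))) * (1 + t ^ m)
      = (1 + t ^ m) * ∏ i ∈ range (Nat.log 2 (K / m) + 1), (1 + (t ^ m) ^ (2 ^ i)) := by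
        rw [mul_comm]; congr 1; exact Finset.prod_congr rfl fun i _ => by rw [← pow_mul]
    _ = 1 + (t ^ m) ^ 2 ^ (Nat.log 2 (K / m) + 1) := this
    _ = 1 + t ^ (m * 2 ^ (Nat.log 2 (K / m) + 1)) := by rw [← pow_mul]

lemma hQQ (N : ℕ) : ∏ n ∈ range (N+1), ((1 + (X:PS)^(4*(n+1))) * (1 + X^(4*n+1)) * (1 + X^(4*n+3)))
    = ∏ j ∈ (Icc 1 (4*N+4)).filter (fun j => ¬ (j % 4 = 2)), (1 + X ^ j) := by
  induction N with
  | zero =>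
    have hset : (Icc 1 4).filter (fun j => ¬ (j % 4 = 2)) = {1, 3, 4} := by decide
    rw [show 4*0+4 = 4 by norm_num, hset]
    rw [Finset.prod_insert (by decide), Finset.prod_insert (by decide), Finset.prod_singleton]
    rw [Finset.prod_range_one]
    ring
  | succ N ih =>
    have hset : (Icc 1 (4*(N+1)+4)).filter (fun j => ¬ (j % 4 = 2)) =
        insert (4*N+5) (insert (4*N+7) (insert (4*N+8)
          ((Icc 1 (4*N+4)).filter (fun j => ¬ (j % 4 = 2))))) := by
      ext j
      simp only [mem_filter, mem_Icc, Finset.mem_insert]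
      omega
    rw [Finset.prod_range_succ, ih, hset]
    rw [Finset.prod_insert (by simp only [Finset.mem_insert, mem_filter, mem_Icc]; omega),
        Finset.prod_insert (by simp only [Finset.mem_insert, mem_filter, mem_Icc]; omega),
        Finset.prod_insert (by simp only [mem_filter, mem_Icc]; omega)]
    rw [show 4*(N+1)+1 = 4*N+5 by ring, show 4*(N+1)+3 = 4*N+7 by ring,
        show 4*((N+1)+1) = 4*N+8 by ring]
    ring







noncomputable def dd (n : ℕ) : R2 := coeff (R := R2) n (∏ k ∈ Icc 1 n, (1 + (X:PS) ^ (2*k)))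

lemma main_ind (c : ℕ → R2)
    (hc : ∀ N, coeff (R := R2) N (PowerSeries.mk c * ∏ j ∈ Icc 1 (N+1), (1 + (X:PS) ^ j)) =
      coeff (R := R2) N (∏ j ∈ (Icc 1 (4*N+4)).filter (fun j => ¬ (j % 4 = 2)), (1 + (X:PS) ^ j))) :
    ∀ N, c N = dd N := by
  intro N
  induction N using Nat.strong_induction_on with
  | _ N IH =>
  set V : PS := ∏ j ∈ (Icc 1 N).filter (fun j => ¬ (j % 4 = 2)), (1 + (X:PS) ^ j) with hVdef
  set W : PS := ∏ j ∈ (Icc 1 N).filter (fun j => (j % 4 = 2)), (1 + (X:PS) ^ j) with hWdef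
  set T : PS := ∏ k ∈ Icc 1 N, (1 + (X:PS) ^ (2*k)) with hTdef
  have hUVW : (∏ j ∈ Icc 1 N, (1 + (X:PS) ^ j)) = W * V :=
    (Finset.prod_filter_mul_prod_filter_not (Icc 1 N) (fun j => j % 4 = 2) _).symm
  have key : ∀ i ≤ N, coeff (R := R2) i (PowerSeries.mk c * (W * V)) = coeff (R := R2) i V := by
    intro i hi
    have l1 : coeff (R := R2) i (PowerSeries.mk c * ∏ j ∈ Icc 1 (i+1), (1 + (X:PS) ^ j)) =
        coeff (R := R2) i (PowerSeries.mk c * ∏ j ∈ Icc 1 i, (1 + (X:PS) ^ j)) :=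
      coeff_mul_prod_subset _ (fun j => j) (Icc_subset_Icc (le_refl 1) (by omega)) i
        (fun j hj hj2 => by beta_reduce; simp only [mem_Icc] at hj hj2 ⊢; omega)
    have l2 : coeff (R := R2) i (PowerSeries.mk c * ∏ j ∈ Icc 1 N, (1 + (X:PS) ^ j)) =
        coeff (R := R2) i (PowerSeries.mk c * ∏ j ∈ Icc 1 i, (1 + (X:PS) ^ j)) :=
      coeff_mul_prod_subset _ (fun j => j) (Icc_subset_Icc (le_refl 1) hi) i
        (fun j hj hj2 => by beta_reduce; simp only [mem_Icc] at hj hj2 ⊢; omega)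
    have r1 : coeff (R := R2) i ((1:PS) * ∏ j ∈ (Icc 1 (4*i+4)).filter (fun j => ¬ (j % 4 = 2)), (1 + (X:PS) ^ j)) =
        coeff (R := R2) i ((1:PS) * ∏ j ∈ (Icc 1 i).filter (fun j => ¬ (j % 4 = 2)), (1 + (X:PS) ^ j)) :=
      coeff_mul_prod_subset _ (fun j => j)
        (Finset.filter_subset_filter _ (Icc_subset_Icc (le_refl 1) (by omega))) i
        (fun j hj hj2 => by
          beta_reduce
          simp only [mem_filter, mem_Icc] at hj hj2 ⊢
          by_contra hcon
          exact hj2 ⟨⟨hj.1.1, by omega⟩, hj.2⟩)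
    have r2 : coeff (R := R2) i ((1:PS) * V) =
        coeff (R := R2) i ((1:PS) * ∏ j ∈ (Icc 1 i).filter (fun j => ¬ (j % 4 = 2)), (1 + (X:PS) ^ j)) :=
      coeff_mul_prod_subset _ (fun j => j)
        (Finset.filter_subset_filter _ (Icc_subset_Icc (le_refl 1) hi)) i
        (fun j hj hj2 => by
          beta_reduce
          simp only [mem_filter, mem_Icc] at hj hj2 ⊢
          by_contra hcon
          exact hj2 ⟨⟨hj.1.1, by omega⟩, hj.2⟩)
    rw [← hUVW, l2, ← l1, hc i]
    rw [one_mul] at r2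
    rw [r2, ← r1, one_mul]
  have key2 : coeff (R := R2) N ((PowerSeries.mk c * (W * V)) * T) = coeff (R := R2) N (V * T) :=
    coeff_mul_congr _ _ _ N key
  have keyT : ∀ i ≤ N, coeff (R := R2) i T = dd i := by
    intro i hi
    have h := coeff_mul_prod_subset (1:PS) (fun k => 2*k) (Icc_subset_Icc (le_refl 1) hi) i
      (fun j hj hj2 => by beta_reduce; simp only [mem_Icc] at hj hj2 ⊢; omega)
    rw [one_mul, one_mul] at h
    exact h
  -- reindex W
  have hWre : W = ∏ m ∈ (Icc 1 N).filter (fun m => Odd m ∧ 2*m ≤ N), (1 + (X:PS) ^ (2*m)) := by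
    rw [hWdef]
    refine Finset.prod_nbij' (fun j => j / 2) (fun m => 2*m) ?_ ?_ ?_ ?_ ?_
    · intro j hj
      beta_reduce
      simp only [mem_filter, mem_Icc, Nat.odd_iff] at hj ⊢
      omega
    · intro m hm
      beta_reduce
      simp only [mem_filter, mem_Icc, Nat.odd_iff] at hm ⊢
      omega
    · intro j hj
      beta_reduce
      simp only [mem_filter, mem_Icc] at hj
      omega
    · intro m hm
      beta_reduce
      simp only [mem_filter, mem_Icc, Nat.odd_iff] at hm
      omega
    · intro j hj
      beta_reduce
      simp only [mem_filter, mem_Icc] at hj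
      rw [show 2 * (j / 2) = j by omega]
  have step4 : coeff (R := R2) N (PowerSeries.mk c * (W * V) * T) = coeff (R := R2) N (PowerSeries.mk c * V) := by
    rw [show PowerSeries.mk c * (W*V) * T = (PowerSeries.mk c * V * T) * W by ring, hWre]
    have ext1 : coeff (R := R2) N ((PowerSeries.mk c * V * T) * ∏ m ∈ (Icc 1 N).filter (fun m => Odd m), (1 + (X:PS) ^ (2*m))) =
        coeff (R := R2) N ((PowerSeries.mk c * V * T) * ∏ m ∈ (Icc 1 N).filter (fun m => Odd m ∧ 2*m ≤ N), (1 + (X:PS) ^ (2*m))) :=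
      coeff_mul_prod_subset _ (fun m => 2*m)
        (by intro m hm; simp only [mem_filter, mem_Icc] at hm ⊢; exact ⟨hm.1, hm.2.1⟩) N
        (fun m hm hm2 => by
          beta_reduce
          simp only [mem_filter, mem_Icc, Nat.odd_iff] at hm hm2
          by_contra hcon
          exact hm2 ⟨hm.1, hm.2, by omega⟩)
    rw [← ext1]
    rw [show (PowerSeries.mk c * V * T) * ∏ m ∈ (Icc 1 N).filter (fun m => Odd m), (1 + (X:PS) ^ (2*m))
      = (PowerSeries.mk c * V) * (T * ∏ m ∈ (Icc 1 N).filter (fun m => Odd m), (1 + (X:PS) ^ (2*m))) by ring]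
    have hT2 : T = ∏ k ∈ Icc 1 N, (1 + ((X:PS)^2) ^ k) :=
      Finset.prod_congr rfl (fun k _ => by rw [← pow_mul])
    have hW2 : (∏ m ∈ (Icc 1 N).filter (fun m => Odd m), (1 + (X:PS) ^ (2*m)))
        = ∏ m ∈ (Icc 1 N).filter (fun m => Odd m), (1 + ((X:PS)^2) ^ m) :=
      Finset.prod_congr rfl (fun k _ => by rw [← pow_mul])
    rw [hT2, hW2, euler_prod (X^2 : PS) N]
    have : (∏ m ∈ (Icc 1 N).filter (fun m => Odd m), (1 + ((X:PS)^2) ^ (m * 2 ^ (Nat.log 2 (N / m) + 1))))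
        = ∏ m ∈ (Icc 1 N).filter (fun m => Odd m), (1 + (X:PS) ^ (2 * (m * 2 ^ (Nat.log 2 (N / m) + 1)))) :=
      Finset.prod_congr rfl (fun k _ => by rw [← pow_mul])
    rw [this]
    refine coeff_drop_prod _ _ _ _ (fun m hm => ?_)
    simp only [mem_filter, mem_Icc] at hm
    have hiff := mul_pow_le_iff N m hm.1.1 hm.1.2 (Nat.log 2 (N / m) + 1)
    have : ¬ (m * 2 ^ (Nat.log 2 (N / m) + 1) ≤ N) := by
      rw [hiff]; omega
    omega
  have hfin : coeff (R := R2) N (PowerSeries.mk c * V) = coeff (R := R2) N (PowerSeries.mk dd * V) := by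
    rw [← step4, key2]
    have h1 : coeff (R := R2) N (T * V) = coeff (R := R2) N (PowerSeries.mk dd * V) :=
      coeff_mul_congr _ _ _ N (fun i hi => by rw [keyT i hi, PowerSeries.coeff_mk])
    rw [mul_comm V T, h1]
  rw [PowerSeries.coeff_mul, PowerSeries.coeff_mul] at hfin
  have hmem : ((N,0) : ℕ×ℕ) ∈ Finset.HasAntidiagonal.antidiagonal N := by simp
  rw [← Finset.add_sum_erase _ _ hmem, ← Finset.add_sum_erase _ _ hmem] at hfin
  have hsame : ∑ p ∈ (Finset.HasAntidiagonal.antidiagonal N).erase (N,0), coeff (R := R2) p.1 (PowerSeries.mk c) * coeff (R := R2) p.2 V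
      = ∑ p ∈ (Finset.HasAntidiagonal.antidiagonal N).erase (N,0), coeff (R := R2) p.1 (PowerSeries.mk dd) * coeff (R := R2) p.2 V := by
    refine Finset.sum_congr rfl (fun p hp => ?_)
    have hp1 := Finset.mem_erase.mp hp
    have hp2 := Finset.HasAntidiagonal.mem_antidiagonal.mp hp1.2
    have : p.1 < N := by
      rcases Nat.lt_or_ge p.1 N with h | h
      · exact h
      · exfalso
        apply hp1.1
        have : p.1 = N := by omega
        have h2 : p.2 = 0 := by omega
        exact Prod.ext this h2
    rw [PowerSeries.coeff_mk, PowerSeries.coeff_mk, IH p.1 this]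
  rw [hsame] at hfin
  have hcan := add_right_cancel hfin
  have hV0 : coeff (R := R2) 0 V = 1 := by
    rw [PowerSeries.coeff_zero_eq_constantCoeff]
    exact constcoeff_prod _ (fun j => j)
      (fun j hj => by beta_reduce at hj ⊢; simp only [mem_filter, mem_Icc] at hj; omega)
  rw [PowerSeries.coeff_mk, PowerSeries.coeff_mk, hV0, mul_one, mul_one] at hcan
  exact hcan

lemma runb_ex (S : Finset ℕ) (M : ℕ) : ∃ x, Finset.Icc x M ⊆ S :=
  ⟨M+1, by rw [Finset.Icc_eq_empty (by omega)]; exact Finset.empty_subset S⟩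

/-- run bottom: least x with Icc x M ⊆ S -/
def runb (S : Finset ℕ) (M : ℕ) : ℕ := Nat.find (runb_ex S M)

lemma runb_spec (S : Finset ℕ) (M : ℕ) : Icc (runb S M) M ⊆ S := Nat.find_spec (runb_ex S M)

lemma runb_le (S : Finset ℕ) (M : ℕ) {x : ℕ} (h : Icc x M ⊆ S) : runb S M ≤ x :=
  Nat.find_le h

lemma runb_pos (S : Finset ℕ) (M : ℕ) (h0 : 0 ∉ S) : 1 ≤ runb S M := by
  by_contra h
  have h1 : runb S M = 0 := by omega
  have := runb_spec S M
  rw [h1] at this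
  exact h0 (this (by simp [mem_Icc]))

lemma runb_le_max (S : Finset ℕ) (M : ℕ) (hM : M ∈ S) : runb S M ≤ M := by
  apply runb_le
  intro x hx
  simp only [mem_Icc] at hx
  have hxM : x = M := le_antisymm hx.2 hx.1
  rwa [hxM]

lemma runb_pred_notmem (S : Finset ℕ) (M : ℕ) (h0 : 0 ∉ S) (hM : M ∈ S) :
    runb S M - 1 ∉ S := by
  have hb1 := runb_pos S M h0
  have hbM := runb_le_max S M hM
  intro hmem
  have hmin := Nat.find_min (runb_ex S M) (m := runb S M - 1)
    (show runb S M - 1 < runb S M by omega)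
  apply hmin
  intro x hx
  simp only [mem_Icc] at hx
  rcases Nat.eq_or_lt_of_le hx.1 with h | h
  · rwa [← h]
  · exact runb_spec S M (mem_Icc.mpr ⟨by omega, hx.2⟩)

lemma runb_eq (S : Finset ℕ) (M b : ℕ) (h1 : Icc b M ⊆ S) (h2 : b - 1 ∉ S)
    (h3 : 1 ≤ b) (h4 : b ≤ M) : runb S M = b := by
  have hle := runb_le S M h1
  rcases Nat.eq_or_lt_of_le hle with h | h
  · exact h
  · exfalso
    exact h2 (runb_spec S M (mem_Icc.mpr ⟨by omega, by omega⟩))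

def frk (S : Finset ℕ) : Finset ℕ :=
  if hS : S.Nonempty then
    if S.min' hS ≤ S.max' hS - runb S (S.max' hS) + 1 then
      insert (S.max' hS + 1) ((S.erase (S.min' hS)).erase (S.max' hS - S.min' hS + 1))
    else
      insert (S.max' hS - runb S (S.max' hS) + 1)
        (insert (runb S (S.max' hS) - 1) (S.erase (S.max' hS)))
  else S

lemma gauss_Icc (a b : ℕ) (h : a ≤ b + 1) :
    (∑ i ∈ Icc a b, i) * 2 + a * (a-1) = (b+1) * b := by
  have hset : Icc a b = range (b+1) \ range a := by
    ext x; simp only [mem_Icc, mem_range, mem_sdiff]; omega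
  have hsub : range a ⊆ range (b+1) := by intro x; simp only [mem_range]; omega
  have hsd := Finset.sum_sdiff (f := fun i => i) hsub
  have h1 := Finset.sum_range_id_mul_two (b+1)
  have h2 := Finset.sum_range_id_mul_two a
  rw [hset]
  have hb : (b+1) - 1 = b := by omega
  have ha : a * (a - 1) = a * a - a := by cases a <;> simp [Nat.succ_sub_one] <;> ring_nf <;> omega
  rw [hb] at h1
  linarith [hsd, h1, h2, ha]

lemma subset_Icc_of_sum (A : Finset ℕ) (k : ℕ) (h0 : ∀ x ∈ A, 1 ≤ x)
    (hs : ∑ x ∈ A, x = k) : A ⊆ Icc 1 k := by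
  intro x hx
  rw [mem_Icc]
  refine ⟨h0 x hx, ?_⟩
  calc x ≤ ∑ y ∈ A, y := Finset.single_le_sum (f := fun y => y) (fun i _ => Nat.zero_le i) hx
  _ = k := hs

lemma frk_spec (k : ℕ) (hk : 1 ≤ k)
    (hpent : ∀ j : ℕ, 1 ≤ j → 2*k ≠ j*(3*j-1) ∧ 2*k ≠ j*(3*j+1))
    (S : Finset ℕ) (hS1 : S ⊆ Icc 1 k) (hS2 : ∑ x ∈ S, x = k) :
    ((∀ x ∈ frk S, 1 ≤ x) ∧ ∑ x ∈ frk S, x = k) ∧ frk (frk S) = S ∧ frk S ≠ S := by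
  have h0 : ∀ x ∈ S, 1 ≤ x := fun x hx => (mem_Icc.mp (hS1 hx)).1
  have hne : S.Nonempty := by
    rcases S.eq_empty_or_nonempty with rfl | h
    · simp at hS2; omega
    · exact h
  set s := S.min' hne with hs_def
  set M := S.max' hne with hM_def
  set b := runb S M with hb_def
  have hsmem : s ∈ S := S.min'_mem hne
  have hMmem : M ∈ S := S.max'_mem hne
  have hminle : ∀ x ∈ S, s ≤ x := fun x hx => S.min'_le x hx
  have hmaxge : ∀ x ∈ S, x ≤ M := fun x hx => S.le_max' x hx
  have hs1 : 1 ≤ s := h0 s hsmem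
  have hsM : s ≤ M := hminle M hMmem
  have h0S : (0:ℕ) ∉ S := fun h => by have := h0 0 h; omega
  have hbrun : Icc b M ⊆ S := runb_spec S M
  have hb1 : 1 ≤ b := runb_pos S M h0S
  have hbM : b ≤ M := runb_le_max S M hMmem
  have hbmem : b ∈ S := hbrun (mem_Icc.mpr ⟨le_refl b, hbM⟩)
  have hbnot : b - 1 ∉ S := runb_pred_notmem S M h0S hMmem
  have hsb : s ≤ b := hminle b hbmem
  by_cases hA : s ≤ M - b + 1
  -- ===================== CASE A =====================
  · have hM2s : 2*s ≤ M := by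
      by_contra hcon
      -- then b ≤ M - s + 1 ≤ s, so b = s, S = Icc s M, M = 2s-1
      have hbs : b = s := by omega
      have hSicc : S = Icc s M := by
        apply Finset.Subset.antisymm
        · intro x hx; exact mem_Icc.mpr ⟨hminle x hx, hmaxge x hx⟩
        · rw [← hbs]; exact hbrun
      have hMval : M = 2*s - 1 := by omega
      have hgauss := gauss_Icc s M (by omega)
      rw [← hSicc, hS2] at hgauss
      obtain ⟨j, hj⟩ : ∃ j, s = j + 1 := ⟨s - 1, by omega⟩
      have hkey : (2*k) = (j+1)*(3*(j+1)-1) := by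
        have hident : (2*j+2)*(2*j+1) = (j+1)*j + (j+1)*(3*j+2) := by ring
        have h3 : 3*(j+1)-1 = 3*j+2 := by omega
        rw [h3]
        have hM2 : M + 1 = 2*j+2 := by omega
        have hM1 : M = 2*j+1 := by omega
        rw [hM2, hM1] at hgauss
        have hj1 : (j+1) - 1 = j := by omega
        rw [hj, hj1] at hgauss
        omega
      exact (hpent (j+1) (by omega)).1 hkey
    -- key positions
    have hMs1 : b ≤ M - s + 1 := by omega
    have hMs1mem : M - s + 1 ∈ S := hbrun (mem_Icc.mpr ⟨hMs1, by omega⟩)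
    have hMs1ne : M - s + 1 ≠ s := by omega
    have hM1notin : M + 1 ∉ S := fun h => by have := hmaxge _ h; omega
    set S₂ := insert (M+1) ((S.erase s).erase (M - s + 1)) with hS₂def
    have hfrk : frk S = S₂ := by rw [frk, dif_pos hne, if_pos hA]
    have hmem₂ : ∀ y, y ∈ S₂ ↔ (y = M+1 ∨ (y ∈ S ∧ y ≠ s ∧ y ≠ M - s + 1)) := by
      intro y
      simp only [hS₂def, Finset.mem_insert, Finset.mem_erase]
      tauto
    -- sums
    have hsum1 : ∑ x ∈ S.erase s, x + s = ∑ x ∈ S, x := Finset.sum_erase_add S _ hsmem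
    have hsum2 : ∑ x ∈ (S.erase s).erase (M-s+1), x + (M-s+1) = ∑ x ∈ S.erase s, x :=
      Finset.sum_erase_add _ _ (Finset.mem_erase.mpr ⟨hMs1ne, hMs1mem⟩)
    have hM1notin₂ : M + 1 ∉ (S.erase s).erase (M-s+1) := by
      intro h
      exact hM1notin (Finset.mem_of_mem_erase (Finset.mem_of_mem_erase h))
    have hsum₂ : ∑ x ∈ S₂, x = k := by
      rw [hS₂def, Finset.sum_insert hM1notin₂]
      omega
    have h0₂ : ∀ x ∈ S₂, 1 ≤ x := by
      intro x hx
      rcases (hmem₂ x).mp hx with h | h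
      · omega
      · exact h0 x h.1
    -- compute data of S₂
    have hne₂ : S₂.Nonempty := ⟨M+1, by rw [hmem₂]; left; rfl⟩
    have hmax₂ : S₂.max' hne₂ = M + 1 := by
      apply le_antisymm
      · apply Finset.max'_le
        intro y hy
        rcases (hmem₂ y).mp hy with h | h
        · omega
        · have := hmaxge y h.1; omega
      · exact S₂.le_max' _ ((hmem₂ (M+1)).mpr (Or.inl rfl))
    have hmin₂gt : s < S₂.min' hne₂ := by
      have hmm := S₂.min'_mem hne₂
      rcases (hmem₂ _).mp hmm with h | h
      · omega
      · have h1 := hminle _ h.1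
        have h2 := h.2.1
        omega
    have hrun₂ : runb S₂ (M+1) = M - s + 2 := by
      apply runb_eq
      · intro y hy
        simp only [mem_Icc] at hy
        rcases Nat.eq_or_lt_of_le hy.2 with h | h
        · rw [h]; exact (hmem₂ _).mpr (Or.inl rfl)
        · refine (hmem₂ y).mpr (Or.inr ⟨hbrun (mem_Icc.mpr ⟨by omega, by omega⟩), by omega, by omega⟩)
      · intro h
        rcases (hmem₂ _).mp (show M - s + 2 - 1 ∈ S₂ from h) with h' | h'
        · omega
        · exact h'.2.2 (by omega)
      · omega
      · omega
    -- apply frk to S₂ : case B branch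
    have hfrk₂ : frk S₂ = S := by
      rw [frk, dif_pos hne₂]
      rw [if_neg (by rw [hmax₂, hrun₂]; omega)]
      rw [hmax₂, hrun₂]
      rw [show M + 1 - (M - s + 2) + 1 = s by omega, show M - s + 2 - 1 = M - s + 1 by omega]
      have he : S₂.erase (M+1) = (S.erase s).erase (M-s+1) := by
        rw [hS₂def]; exact Finset.erase_insert hM1notin₂
      rw [he]
      rw [Finset.insert_erase (Finset.mem_erase.mpr ⟨hMs1ne, hMs1mem⟩), Finset.insert_erase hsmem]
    have hneq : S₂ ≠ S := by
      intro h
      rw [← h] at hM1notin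
      exact hM1notin ((hmem₂ (M+1)).mpr (Or.inl rfl))
    rw [hfrk]
    exact ⟨⟨h0₂, hsum₂⟩, hfrk₂, hneq⟩
  -- ===================== CASE B =====================
  · have htlt : M - b + 1 < s := by omega
    have hb2 : 2 ≤ b := by omega
    have hMexc : M + 3 ≤ 2*b := by
      by_contra hcon
      -- M = 2b - 2, s = b, S = Icc b M
      have hM2b : M = 2*b - 2 := by omega
      have hsb2 : s = b := by omega
      have hSicc : S = Icc b M := by
        apply Finset.Subset.antisymm
        · intro x hx; rw [← hsb2] at hbrun ⊢; exact mem_Icc.mpr ⟨hminle x hx, hmaxge x hx⟩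
        · exact hbrun
      have hgauss := gauss_Icc b M (by omega)
      rw [← hSicc, hS2] at hgauss
      obtain ⟨j, hj⟩ : ∃ j, b = j + 1 := ⟨b - 1, by omega⟩
      have hkey : (2*k) = j*(3*j+1) := by
        have hident : (2*j+1)*(2*j) = (j+1)*j + j*(3*j+1) := by ring
        have hM1 : M + 1 = 2*j+1 := by omega
        have hM0 : M = 2*j := by omega
        rw [hM1, hM0] at hgauss
        have hj1 : (j+1) - 1 = j := by omega
        rw [hj, hj1] at hgauss
        omega
      exact (hpent j (by omega)).2 hkey
    have htb : M - b + 1 < b - 1 := by omega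
    have htnot : M - b + 1 ∉ S := fun h => by have := hminle _ h; omega
    set S₂ := insert (M - b + 1) (insert (b-1) (S.erase M)) with hS₂def
    have hfrk : frk S = S₂ := by rw [frk, dif_pos hne, if_neg hA]
    have hmem₂ : ∀ y, y ∈ S₂ ↔ (y = M - b + 1 ∨ y = b - 1 ∨ (y ∈ S ∧ y ≠ M)) := by
      intro y
      simp only [hS₂def, Finset.mem_insert, Finset.mem_erase]
      tauto
    have hbnotE : b - 1 ∉ S.erase M := fun h => hbnot (Finset.mem_of_mem_erase h)
    have htnotI : M - b + 1 ∉ insert (b-1) (S.erase M) := by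
      intro h
      rcases Finset.mem_insert.mp h with h | h
      · omega
      · exact htnot (Finset.mem_of_mem_erase h)
    have hsumE : ∑ x ∈ S.erase M, x + M = ∑ x ∈ S, x := Finset.sum_erase_add S _ hMmem
    have hsum₂ : ∑ x ∈ S₂, x = k := by
      rw [hS₂def, Finset.sum_insert htnotI, Finset.sum_insert hbnotE]
      omega
    have h0₂ : ∀ x ∈ S₂, 1 ≤ x := by
      intro x hx
      rcases (hmem₂ x).mp hx with h | h | h
      · omega
      · omega
      · exact h0 x h.1
    have hne₂ : S₂.Nonempty := ⟨M - b + 1, (hmem₂ _).mpr (Or.inl rfl)⟩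
    have hM1mem₂ : M - 1 ∈ S₂ := by
      rcases Nat.eq_or_lt_of_le hbM with h | h
      · exact (hmem₂ _).mpr (Or.inr (Or.inl (by omega)))
      · exact (hmem₂ _).mpr (Or.inr (Or.inr ⟨hbrun (mem_Icc.mpr ⟨by omega, by omega⟩), by omega⟩))
    have hmax₂ : S₂.max' hne₂ = M - 1 := by
      apply le_antisymm
      · apply Finset.max'_le
        intro y hy
        rcases (hmem₂ y).mp hy with h | h | h
        · omega
        · omega
        · have := hmaxge y h.1; omega
      · exact S₂.le_max' _ hM1mem₂
    have hmin₂ : S₂.min' hne₂ = M - b + 1 := by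
      apply le_antisymm
      · exact S₂.min'_le _ ((hmem₂ _).mpr (Or.inl rfl))
      · apply Finset.le_min'
        intro y hy
        rcases (hmem₂ y).mp hy with h | h | h
        · omega
        · omega
        · have := hminle y h.1; omega
    have hrunle : runb S₂ (M-1) ≤ b - 1 := by
      apply runb_le
      intro y hy
      simp only [mem_Icc] at hy
      rcases Nat.eq_or_lt_of_le hy.1 with h | h
      · exact (hmem₂ y).mpr (Or.inr (Or.inl h.symm))
      · exact (hmem₂ y).mpr (Or.inr (Or.inr ⟨hbrun (mem_Icc.mpr ⟨by omega, by omega⟩), by omega⟩))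
    have hfrk₂ : frk S₂ = S := by
      rw [frk, dif_pos hne₂]
      rw [if_pos (by rw [hmax₂, hmin₂]; omega)]
      rw [hmax₂, hmin₂]
      rw [show M - 1 - (M - b + 1) + 1 = b - 1 by omega, show M - 1 + 1 = M by omega]
      have he1 : S₂.erase (M - b + 1) = insert (b-1) (S.erase M) := by
        rw [hS₂def]; exact Finset.erase_insert htnotI
      rw [he1]
      rw [Finset.erase_insert hbnotE]
      exact Finset.insert_erase hMmem
    have hMnot₂ : M ∉ S₂ := by
      intro h
      rcases (hmem₂ M).mp h with h | h | h
      · omega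
      · omega
      · exact h.2 rfl
    have hneq : S₂ ≠ S := by
      intro h
      rw [h] at hMnot₂
      exact hMnot₂ hMmem
    rw [hfrk]
    exact ⟨⟨h0₂, hsum₂⟩, hfrk₂, hneq⟩

lemma even_card_of_invol {α : Type} [DecidableEq α] (s : Finset α) (f : α → α)
    (h1 : ∀ x ∈ s, f x ∈ s) (h2 : ∀ x ∈ s, f (f x) = x) (h3 : ∀ x ∈ s, f x ≠ x) :
    Even s.card := by
  induction s using Finset.strongInduction with
  | _ s ih =>
  rcases s.eq_empty_or_nonempty with rfl | ⟨x, hx⟩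
  · simp
  · have hfx : f x ∈ s := h1 x hx
    have hxfx : f x ≠ x := h3 x hx
    set s' := (s.erase x).erase (f x) with hs'
    have hmem : ∀ y, y ∈ s' ↔ (y ∈ s ∧ y ≠ x ∧ y ≠ f x) := by
      intro y
      simp only [hs', Finset.mem_erase]
      tauto
    have hsub : s' ⊂ s := by
      constructor
      · intro y hy; exact ((hmem y).mp hy).1
      · intro hcon
        have := (hmem x).mp (hcon hx)
        exact this.2.1 rfl
    have hcards : s.card = s'.card + 2 := by
      have c1 : (s.erase x).card = s.card - 1 := Finset.card_erase_of_mem hx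
      have c2 : s'.card = (s.erase x).card - 1 :=
        Finset.card_erase_of_mem (Finset.mem_erase.mpr ⟨hxfx, hfx⟩)
      have hpos : 1 ≤ s.card := Finset.card_pos.mpr ⟨x, hx⟩
      have hpos2 : 2 ≤ s.card := by
        have : ({x, f x} : Finset α) ⊆ s := by
          intro y hy
          rcases Finset.mem_insert.mp hy with rfl | hy
          · exact hx
          · rw [Finset.mem_singleton.mp hy]; exact hfx
        have hc : ({x, f x} : Finset α).card = 2 := by
          rw [Finset.card_insert_of_notMem (by simp [Ne.symm hxfx]), Finset.card_singleton]
        calc 2 = ({x, f x} : Finset α).card := hc.symm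
        _ ≤ s.card := Finset.card_le_card this
      omega
    have hev := ih s' hsub
      (by
        intro y hy
        rw [hmem] at hy ⊢
        refine ⟨h1 y hy.1, ?_, ?_⟩
        · intro hc
          apply hy.2.2
          rw [← h2 y hy.1, hc]
        · intro hc
          apply hy.2.1
          rw [← h2 y hy.1, hc, h2 x hx])
      (fun y hy => h2 y ((hmem y).mp hy).1)
      (fun y hy => h3 y ((hmem y).mp hy).1)
    rw [hcards]
    rcases hev with ⟨m, hm⟩
    exact ⟨m + 1, by omega⟩

theorem franklin (k : ℕ) (hk : 1 ≤ k)
    (hpent : ∀ j : ℕ, 1 ≤ j → 2*k ≠ j*(3*j-1) ∧ 2*k ≠ j*(3*j+1)) :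
    Even (((Icc 1 k).powerset.filter (fun S => ∑ x ∈ S, x = k)).card) := by
  apply even_card_of_invol _ frk
  · intro S hS
    simp only [Finset.mem_filter, Finset.mem_powerset] at hS ⊢
    obtain ⟨⟨hp, hsum⟩, _, _⟩ := frk_spec k hk hpent S hS.1 hS.2
    exact ⟨subset_Icc_of_sum _ k hp hsum, hsum⟩
  · intro S hS
    simp only [Finset.mem_filter, Finset.mem_powerset] at hS
    exact (frk_spec k hk hpent S hS.1 hS.2).2.1
  · intro S hS
    simp only [Finset.mem_filter, Finset.mem_powerset] at hS
    exact (frk_spec k hk hpent S hS.1 hS.2).2.2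







lemma dd_sq (n : ℕ) (hn : 1 ≤ n) (h : dd n ≠ 0) : ∃ x : ℤ, x^2 = 12*(n:ℤ)+1 := by
  rw [dd, coeff_count] at h
  by_cases hpar : n % 2 = 1
  · exfalso
    apply h
    have hemp : (Icc 1 n).powerset.filter (fun t => ∑ k ∈ t, 2*k = n) = ∅ := by
      rw [Finset.filter_eq_empty_iff]
      intro t _
      beta_reduce
      have h2 : ∑ k ∈ t, 2*k = 2 * ∑ k ∈ t, k := by rw [Finset.mul_sum]
      omega
    rw [hemp]
    simp
  · obtain ⟨k, hk⟩ : ∃ k, n = 2*k := ⟨n/2, by omega⟩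
    have hk1 : 1 ≤ k := by omega
    have hsetEq : (Icc 1 n).powerset.filter (fun t => ∑ x ∈ t, 2*x = n)
        = (Icc 1 k).powerset.filter (fun S => ∑ x ∈ S, x = k) := by
      ext t
      simp only [Finset.mem_filter, Finset.mem_powerset]
      constructor
      · rintro ⟨hsub, hsum⟩
        have hmulsum : ∑ x ∈ t, 2*x = 2 * ∑ x ∈ t, x := by rw [Finset.mul_sum]
        have hsum' : ∑ x ∈ t, x = k := by omega
        refine ⟨?_, hsum'⟩
        intro x hx
        have h1 : 1 ≤ x := (mem_Icc.mp (hsub hx)).1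
        have h2 : x ≤ k := by
          calc x ≤ ∑ y ∈ t, y :=
            Finset.single_le_sum (f := fun y => y) (fun i _ => Nat.zero_le i) hx
          _ = k := hsum'
        exact mem_Icc.mpr ⟨h1, h2⟩
      · rintro ⟨hsub, hsum⟩
        have hmulsum : ∑ x ∈ t, 2*x = 2 * ∑ x ∈ t, x := by rw [Finset.mul_sum]
        exact ⟨hsub.trans (Icc_subset_Icc le_rfl (by omega)), by omega⟩
    rw [hsetEq] at h
    by_contra hcon
    push_neg at hcon
    have hpent : ∀ j : ℕ, 1 ≤ j → 2*k ≠ j*(3*j-1) ∧ 2*k ≠ j*(3*j+1) := by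
      intro j hj
      have hjz : (1:ℤ) ≤ (j:ℤ) := by exact_mod_cast hj
      have hnk : (n:ℤ) = 2*(k:ℤ) := by exact_mod_cast hk
      constructor
      · intro he
        have he' : (2*(k:ℤ)) = (j:ℤ)*(3*(j:ℤ)-1) := by
          have hc : ((j*(3*j-1) : ℕ) : ℤ) = (j:ℤ)*(3*(j:ℤ)-1) := by
            push_cast [Nat.cast_sub (by omega : 1 ≤ 3*j)]
            ring
          rw [← hc]
          exact_mod_cast he
        apply hcon (6*(j:ℤ) - 1)
        linear_combination (-12)*hnk + (-12)*he'
      · intro he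
        have he' : (2*(k:ℤ)) = (j:ℤ)*(3*(j:ℤ)+1) := by exact_mod_cast he
        apply hcon (6*(j:ℤ) + 1)
        linear_combination (-12)*hnk + (-12)*he'
    have hev := franklin k hk1 hpent
    apply h
    obtain ⟨mm, hmm⟩ := hev
    rw [hmm]
    push_cast
    ring_nf
    rw [show ((2:R2) = 0) from rfl]
    ring

lemma prod_range_eq_Icc (N : ℕ) (f : ℕ → PS) : ∏ n ∈ range N, f (n+1) = ∏ j ∈ Icc 1 N, f j := by
  refine Finset.prod_nbij' (fun n => n+1) (fun j => j-1) ?_ ?_ ?_ ?_ ?_ <;>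
    intro a ha <;> simp only [Finset.mem_range, mem_Icc] at * <;> first | omega | (congr 1; omega)

/-- If `p` is prime, `1 ≤ r ≤ p - 1`, and `12r + 1` is a quadratic nonresidue mod `p`,
then `C̄₄₁(pm + r) ≡ 0 (mod 2)` for all `m ≥ 0`. -/
theorem C41_nonresidue_mod_two (C : ℕ → ℤ)
    (hC : ∀ N : ℕ, PowerSeries.coeff (R := ℤ) N
      ((PowerSeries.mk fun n => C n) *
        ∏ n ∈ Finset.range (N + 1), (1 - (PowerSeries.X : PowerSeries ℤ) ^ (n + 1))) =
      PowerSeries.coeff (R := ℤ) N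
      (∏ n ∈ Finset.range (N + 1),
        ((1 - (PowerSeries.X : PowerSeries ℤ) ^ (4 * (n + 1))) *
          (1 + PowerSeries.X ^ (4 * n + 1)) * (1 + PowerSeries.X ^ (4 * n + 3)))))
    (p : ℕ) (hp : p.Prime) (r : ℕ) (hr1 : 1 ≤ r) (hr2 : r ≤ p - 1)
    (hnr : ¬ ∃ x : ℤ, x ^ 2 ≡ 12 * (r : ℤ) + 1 [ZMOD p])
    (m : ℕ) :
    C (p * m + r) ≡ 0 [ZMOD 2] := by
  set c : ℕ → R2 := fun n => ((C n : ℤ) : R2) with hc_def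
  set φ : ℤ →+* R2 := Int.castRingHom R2 with hφ
  have hmapmk : PowerSeries.map φ (PowerSeries.mk (fun n => C n)) = PowerSeries.mk c := by
    ext n
    rw [PowerSeries.coeff_map, PowerSeries.coeff_mk, PowerSeries.coeff_mk]
    rfl
  have hc : ∀ N, coeff (R := R2) N (PowerSeries.mk c * ∏ j ∈ Icc 1 (N+1), (1 + (X:PS) ^ j)) =
      coeff (R := R2) N (∏ j ∈ (Icc 1 (4*N+4)).filter (fun j => ¬ (j % 4 = 2)), (1 + (X:PS) ^ j)) := by
    intro N
    have h := congrArg φ (hC N)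
    rw [← PowerSeries.coeff_map, ← PowerSeries.coeff_map] at h
    simp only [map_mul, map_prod, map_sub, map_add, map_one, map_pow, PowerSeries.map_X,
      hmapmk] at h
    simp only [sub_eq_add_ps] at h
    rw [hQQ N] at h
    rw [← h]
    congr 1
    rw [← prod_range_eq_Icc (N+1) (fun j => 1 + (X:PS)^j)]
  have hmain := main_ind c hc (p * m + r)
  have hdd : dd (p * m + r) = 0 := by
    by_contra hne
    obtain ⟨x, hx⟩ := dd_sq (p * m + r) (by omega) hne
    apply hnr
    refine ⟨x, ?_⟩
    have : x ^ 2 - (12 * (r:ℤ) + 1) = (p:ℤ) * (12 * m) := by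
      rw [hx]
      push_cast
      ring
    have hdvd : (p:ℤ) ∣ (12 * (r:ℤ) + 1) - x^2 := ⟨-(12*m), by linear_combination -this⟩
    exact Int.modEq_iff_dvd.mpr hdvd
  have hc0 : (C (p*m+r) : ZMod 2) = 0 := by
    have := hmain.trans hdd
    exact this
  have hdvd2 : (2:ℤ) ∣ C (p*m+r) := by
    have := (ZMod.intCast_zmod_eq_zero_iff_dvd (C (p*m+r)) 2).mp hc0
    exact_mod_cast this
  exact Int.modEq_zero_iff_dvd.mpr hdvd2
end
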